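/- arXiv:1705.09815 — 5 statements merged into one kernel-verified Lean document; each statement's English description precedes it below -/
import Mathlib

section
/- Let α > 0 and λ > 0. Then for every t > 0 the function t ↦ t · E_{α,2}(−λ t^α) is differentiable at t with derivative equal to E_{α,1}(−λ t^α). -/
/-- The Mittag-Leffler function at a real argument,
`E_{α,μ}(x) = ∑_{k=0}^∞ x^k / Γ(αk + μ)`. -/
noncomputable def mittagLefflerReal (α μ x : ℝ) : ℝ :=
  ∑' k : ℕ, x ^ k / Real.Gamma (α * k + μ)


open Filter Nat in
lemma ml_summable_aux (α : ℝ) (hα : 0 < α) (X : ℝ) (hX : 0 ≤ X) :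
    Summable fun k : ℕ => X ^ k / Real.Gamma (α * k + 1) := by
  set Z : ℝ := 2 * X + 1 with hZdef
  have hZ1 : (1 : ℝ) ≤ Z := by simp [hZdef]; linarith
  have hZ0 : (0 : ℝ) < Z := by linarith
  set W : ℝ := max 2 (Z ^ (α⁻¹)) with hWdef
  have hW2 : (2 : ℝ) ≤ W := le_max_left _ _
  have hW1 : (1 : ℝ) ≤ W := by linarith
  have hZW : Z ≤ W ^ α := by
    have h1 : (Z ^ (α⁻¹)) ^ α = Z := by
      rw [← Real.rpow_mul hZ0.le, inv_mul_cancel₀ hα.ne', Real.rpow_one]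
    rw [← h1]
    exact Real.rpow_le_rpow (Real.rpow_nonneg hZ0.le _) (le_max_right _ _) hα.le
  -- factorial bound
  have hfac : ∀ᶠ n : ℕ in atTop, W ^ (n + 1) ≤ (n ! : ℝ) := by
    have h0 := (Real.summable_pow_div_factorial W).tendsto_atTop_zero
    filter_upwards [h0.eventually_lt_const (by positivity : (0:ℝ) < W⁻¹)] with n hn
    have hfpos : (0 : ℝ) < n ! := by positivity
    have : W ^ n < W⁻¹ * n ! := by
      rw [div_lt_iff₀ hfpos] at hn; nlinarith
    calc W ^ (n+1) = W ^ n * W := by ring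
      _ ≤ W⁻¹ * n ! * W := by nlinarith [pow_nonneg (by linarith : (0:ℝ) ≤ W) n]
      _ = n ! := by field_simp
  obtain ⟨N, hN⟩ := hfac.exists_forall_of_atTop
  -- eventual geometric bound
  have key : ∀ᶠ k : ℕ in atTop, X ^ k / Real.Gamma (α * k + 1) ≤ (1/2 : ℝ) ^ k := by
    have : Tendsto (fun k : ℕ => α * k) atTop atTop := by
      exact Tendsto.const_mul_atTop hα tendsto_natCast_atTop_atTop
    filter_upwards [this.eventually_ge_atTop ((N : ℝ) + 1), this.eventually_ge_atTop 1]
      with k hk1 hk2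
    set y : ℝ := α * k with hy
    set n : ℕ := ⌊y⌋₊ with hn
    have hy0 : (0 : ℝ) ≤ y := by linarith
    have hnN : N + 1 ≤ n := Nat.le_floor (by exact_mod_cast hk1)
    have hn1 : 1 ≤ n := Nat.le_floor (by exact_mod_cast hk2)
    have hny : (n : ℝ) ≤ y := Nat.floor_le hy0
    have hyn : y ≤ (n : ℝ) + 1 := (Nat.lt_floor_add_one y).le
    -- Γ(y+1) ≥ n!
    have hmono : (n ! : ℝ) ≤ Real.Gamma (y + 1) := by
      have h1 : Real.Gamma ((n : ℝ) + 1) = n ! := Real.Gamma_nat_eq_factorial n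
      rw [← h1]
      refine Real.Gamma_strictMonoOn_Ici.monotoneOn ?_ ?_ (by linarith)
      · simp only [Set.mem_Ici]; exact_mod_cast Nat.succ_le_succ hn1
      · simp only [Set.mem_Ici]; linarith
    have hWy : W ^ y ≤ (n ! : ℝ) := by
      calc W ^ y ≤ W ^ ((n : ℝ) + 1) := Real.rpow_le_rpow_of_exponent_le hW1 hyn
        _ = W ^ (n + 1) := by rw [← Real.rpow_natCast W (n+1)]; push_cast; ring_nf
        _ ≤ n ! := hN n (by omega)
    have hZk : Z ^ k ≤ Real.Gamma (y + 1) := by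
      calc Z ^ k ≤ (W ^ α) ^ k := pow_le_pow_left₀ hZ0.le hZW k
        _ = W ^ y := by
            rw [← Real.rpow_natCast (W ^ α) k, ← Real.rpow_mul (by positivity)]
        _ ≤ n ! := hWy
        _ ≤ Real.Gamma (y + 1) := hmono
    have hZkpos : (0 : ℝ) < Z ^ k := by positivity
    calc X ^ k / Real.Gamma (y + 1) ≤ X ^ k / Z ^ k := by
          exact div_le_div_of_nonneg_left (pow_nonneg hX k) hZkpos hZk
      _ = (X / Z) ^ k := by rw [div_pow]
      _ ≤ (1/2 : ℝ) ^ k := by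
          apply pow_le_pow_left₀ (by positivity)
          rw [div_le_div_iff₀ hZ0 (by norm_num)]
          linarith
  obtain ⟨M, hM⟩ := key.exists_forall_of_atTop
  rw [← summable_nat_add_iff M]
  refine Summable.of_nonneg_of_le (fun k => ?_) (fun k => hM (k + M) (by omega)) ?_
  · have : (0:ℝ) < Real.Gamma (α * (k + M : ℕ) + 1) :=
      Real.Gamma_pos_of_pos (by positivity)
    positivity
  · exact (summable_nat_add_iff M).mpr <|
      summable_geometric_of_lt_one (by norm_num) (by norm_num)

open Filter Nat in
lemma ml_pow_rw (lam s α : ℝ) (hs : 0 ≤ s) (k : ℕ) :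
    (-(lam * s ^ α)) ^ k = (-lam) ^ k * s ^ (α * k) := by
  rw [← neg_mul, mul_pow, Real.rpow_mul hs, Real.rpow_natCast]


/-- Let `α > 0` and `λ > 0`. Then for every `t > 0` the function
`t ↦ t · E_{α,2}(−λ t^α)` is differentiable at `t` with derivative `E_{α,1}(−λ t^α)`. -/
theorem mittagLeffler_two_hasDerivAt (α lam : ℝ) (hα : 0 < α) (hlam : 0 < lam)
    (t : ℝ) (ht : 0 < t) :
    HasDerivAt (fun s : ℝ => s * mittagLefflerReal α 2 (-(lam * s ^ α)))
      (mittagLefflerReal α 1 (-(lam * t ^ α))) t := by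
  simp only [mittagLefflerReal]
  have ht2 : 0 < t / 2 := by linarith
  have htS : t ∈ Set.Ioo (t/2) (t+1) := ⟨by linarith, by linarith⟩
  have hu : Summable fun k : ℕ => (lam * (t+1) ^ α) ^ k / Real.Gamma (α * k + 1) :=
    ml_summable_aux α hα _ (by positivity)
  have hrw : ∀ k : ℕ, (lam * (t+1) ^ α) ^ k = lam ^ k * (t+1) ^ (α * k) := by
    intro k
    rw [mul_pow, Real.rpow_mul (by linarith : (0:ℝ) ≤ t+1), Real.rpow_natCast]
  have hderiv : ∀ (k : ℕ) (s : ℝ), s ∈ Set.Ioo (t/2) (t+1) →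
      HasDerivAt (fun z : ℝ => (-lam) ^ k * z ^ (α * k + 1) / Real.Gamma (α * k + 2))
        ((-lam) ^ k * s ^ (α * k) / Real.Gamma (α * k + 1)) s := by
    intro k s hs
    have hs0 : 0 < s := lt_trans ht2 hs.1
    have h := ((Real.hasDerivAt_rpow_const (p := α * k + 1)
      (Or.inl hs0.ne')).const_mul ((-lam) ^ k)).div_const (Real.Gamma (α * k + 2))
    refine h.congr_deriv ?_
    have h1 : (0:ℝ) < α * k + 1 := by positivity
    rw [show α * (k:ℝ) + 2 = (α * k + 1) + 1 by ring, Real.Gamma_add_one h1.ne',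
      show α * (k:ℝ) + 1 - 1 = α * k by ring]
    have hΓ : (0:ℝ) < Real.Gamma (α * k + 1) := Real.Gamma_pos_of_pos h1
    field_simp
  have hbound : ∀ (k : ℕ) (s : ℝ), s ∈ Set.Ioo (t/2) (t+1) →
      ‖(-lam) ^ k * s ^ (α * k) / Real.Gamma (α * k + 1)‖ ≤
        (lam * (t+1) ^ α) ^ k / Real.Gamma (α * k + 1) := by
    intro k s hs
    have hs0 : 0 < s := lt_trans ht2 hs.1
    have h1 : (0:ℝ) < α * k + 1 := by positivity
    have hΓ : (0:ℝ) < Real.Gamma (α * k + 1) := Real.Gamma_pos_of_pos h1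
    rw [Real.norm_eq_abs, abs_div, abs_of_pos hΓ, abs_mul, abs_pow, abs_neg,
      abs_of_pos hlam, abs_of_nonneg (Real.rpow_nonneg hs0.le _), hrw]
    rw [div_le_div_iff_of_pos_right hΓ]
    exact mul_le_mul_of_nonneg_left
      (Real.rpow_le_rpow hs0.le (by linarith [hs.2]) (by positivity))
      (pow_nonneg hlam.le k)
  have hsum0 : Summable fun k : ℕ =>
      (-lam) ^ k * t ^ (α * k + 1) / Real.Gamma (α * k + 2) := by
    apply Summable.of_norm_bounded (hu.mul_left (t+1))
    intro k
    have h1 : (0:ℝ) < α * k + 1 := by positivity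
    have hΓ1 : (0:ℝ) < Real.Gamma (α * k + 1) := Real.Gamma_pos_of_pos h1
    have hΓ2eq : Real.Gamma (α * k + 2) = (α * k + 1) * Real.Gamma (α * k + 1) := by
      rw [show α * (k:ℝ) + 2 = (α * k + 1) + 1 by ring, Real.Gamma_add_one h1.ne']
    have hΓ2 : (0:ℝ) < Real.Gamma (α * k + 2) := by rw [hΓ2eq]; positivity
    rw [Real.norm_eq_abs, abs_div, abs_of_pos hΓ2, abs_mul, abs_pow, abs_neg,
      abs_of_pos hlam, abs_of_nonneg (Real.rpow_nonneg ht.le _), hrw]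
    have hnum : t ^ (α * (k:ℝ) + 1) ≤ (t+1) ^ (α * k) * (t+1) := by
      calc t ^ (α * (k:ℝ) + 1) ≤ (t+1) ^ (α * (k:ℝ) + 1) :=
            Real.rpow_le_rpow ht.le (by linarith) (by positivity)
        _ = (t+1) ^ (α * k) * (t+1) := by
            rw [Real.rpow_add (by linarith), Real.rpow_one]
    have hden : Real.Gamma (α * k + 1) ≤ Real.Gamma (α * k + 2) := by
      rw [hΓ2eq]
      have hk0 : (0:ℝ) ≤ α * k := by positivity
      nlinarith
    calc lam ^ k * t ^ (α * (k:ℝ) + 1) / Real.Gamma (α * k + 2)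
        ≤ lam ^ k * ((t+1) ^ (α * k) * (t+1)) / Real.Gamma (α * k + 1) := by
          apply div_le_div₀ (by positivity) _ hΓ1 hden
          exact mul_le_mul_of_nonneg_left hnum (pow_nonneg hlam.le k)
      _ = (t+1) * (lam ^ k * (t+1) ^ (α * (k:ℝ)) / Real.Gamma (α * k + 1)) := by ring
  have key := hasDerivAt_tsum_of_isPreconnected hu isOpen_Ioo isPreconnected_Ioo
    hderiv hbound htS hsum0 htS
  have hval : (∑' k : ℕ, (-(lam * t ^ α)) ^ k / Real.Gamma (α * k + 1)) =
      ∑' k : ℕ, (-lam) ^ k * t ^ (α * k) / Real.Gamma (α * k + 1) := by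
    exact tsum_congr fun k => by rw [ml_pow_rw lam t α ht.le]
  rw [hval]
  apply key.congr_of_eventuallyEq
  filter_upwards [isOpen_Ioo.mem_nhds htS] with s hs
  have hs0 : 0 < s := lt_trans ht2 hs.1
  rw [← tsum_mul_left]
  refine tsum_congr fun k => ?_
  rw [ml_pow_rw lam s α hs0.le, Real.rpow_add hs0, Real.rpow_one]
  ring
end

section
/- Let 0 < α < 1 and λ > 0, and set e(r) = E_{α,1}(−λ r^α) for r ≥ 0. Then e is differentiable on (0, ∞), for every t > 0 the function r ↦ (t − r)^{−α} e'(r) is integrable on (0, t), and the Caputo derivative of e of order α satisfies (1/Γ(1−α)) ∫_0^t (t − r)^{−α} e'(r) dr = −λ E_{α,1}(−λ t^α) for all t > 0. -/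
open MeasureTheory

lemma ML.gamma_ge {z : ℝ} (hz : 2 ≤ z) : ((Nat.floor z - 1).factorial : ℝ) ≤ Real.Gamma z := by
  have hz0 : (0:ℝ) ≤ z := by linarith
  have hm : 2 ≤ Nat.floor z := Nat.le_floor (by exact_mod_cast hz)
  have hmz : ((Nat.floor z : ℝ)) ≤ z := Nat.floor_le hz0
  have h2m : (2:ℝ) ≤ (Nat.floor z : ℝ) := by exact_mod_cast hm
  have hmono := Real.Gamma_strictMonoOn_Ici.monotoneOn (Set.mem_Ici.2 h2m) (Set.mem_Ici.2 hz) hmz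
  refine le_trans (le_of_eq ?_) hmono
  have h1 : ((Nat.floor z - 1 : ℕ) : ℝ) + 1 = (Nat.floor z : ℝ) := by
    have : 1 ≤ Nat.floor z := by omega
    push_cast [Nat.cast_sub this]
    ring
  rw [← h1, Real.Gamma_nat_eq_factorial]

lemma ML.summable {a : ℝ} (ha : 0 < a) (μ x : ℝ) (hx : 0 ≤ x) :
    Summable fun k : ℕ => x ^ k / Real.Gamma (a * k + μ) := by
  set N : ℕ := Nat.ceil ((2 - μ) / a) with hN
  rw [← summable_nat_add_iff N]
  set y : ℝ := max 1 (x ^ (1 / a)) with hy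
  have hy1 : 1 ≤ y := le_max_left _ _
  have hy0 : 0 < y := lt_of_lt_of_le one_pos hy1
  have hxy : x ≤ y ^ a := by
    rcases le_or_gt x 1 with h | h
    · exact h.trans (Real.one_le_rpow hy1 ha.le)
    · have hxx : x ^ (1/a) ≤ y := le_max_right _ _
      calc x = (x ^ (1/a)) ^ a := by
              rw [one_div, Real.rpow_inv_rpow hx ha.ne']
           _ ≤ y ^ a := Real.rpow_le_rpow (Real.rpow_nonneg hx _) hxx ha.le
  set ρ : ℝ := (1/2 : ℝ) ^ a with hρ
  have hρ0 : 0 < ρ := Real.rpow_pos_of_pos (by norm_num) _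
  have hρ1 : ρ < 1 := Real.rpow_lt_one (by norm_num) (by norm_num) ha
  set K : ℝ := y ^ (2 - μ) * Real.exp (2*y) * (1/2 : ℝ) ^ (μ - 2) with hK
  have hK0 : 0 ≤ K := by positivity
  have key : ∀ k : ℕ, x ^ (k + N) / Real.Gamma (a * (k + N : ℕ) + μ) ≤ (K * ρ ^ N) * ρ ^ k := by
    intro k
    set n : ℕ := k + N with hn
    have hz : 2 ≤ a * n + μ := by
      have h1 : (2 - μ)/a ≤ (N:ℝ) := Nat.le_ceil _
      have h2 : (N:ℝ) ≤ n := by exact_mod_cast Nat.le_add_left N k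
      have := (div_le_iff₀ ha).1 (h1.trans h2)
      linarith
    set z : ℝ := a * n + μ with hzdef
    set m : ℕ := Nat.floor z - 1 with hm
    have hfl2 : 2 ≤ Nat.floor z := Nat.le_floor (by exact_mod_cast hz)
    have hGam : (m.factorial : ℝ) ≤ Real.Gamma z := ML.gamma_ge hz
    have hGam0 : (0:ℝ) < Real.Gamma z := Real.Gamma_pos_of_pos (by linarith)
    have hfac0 : (0:ℝ) < m.factorial := by exact_mod_cast (Nat.factorial_pos m)
    have hstep1 : x ^ n / Real.Gamma z ≤ x ^ n / m.factorial :=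
      div_le_div_of_nonneg_left (pow_nonneg hx n) hfac0 hGam
    -- m + 1 ≤ z ≤ m + 2
    have hmz1 : (m : ℝ) + 1 ≤ z := by
      have : ((Nat.floor z : ℕ) : ℝ) ≤ z := Nat.floor_le (by linarith)
      have hc : ((m:ℕ):ℝ) = (Nat.floor z : ℝ) - 1 := by
        rw [hm]; push_cast [Nat.cast_sub (by omega : 1 ≤ Nat.floor z)]; ring
      rw [hc]; linarith
    have hmz2 : z ≤ (m : ℝ) + 2 := by
      have : z < (Nat.floor z : ℝ) + 1 := Nat.lt_floor_add_one z
      have hc : ((m:ℕ):ℝ) = (Nat.floor z : ℝ) - 1 := by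
        rw [hm]; push_cast [Nat.cast_sub (by omega : 1 ≤ Nat.floor z)]; ring
      rw [hc]; linarith
    -- x ^ n ≤ y ^ (2 - μ) * y ^ (m : ℝ)
    have hxn : x ^ n ≤ y ^ (2 - μ) * y ^ (m:ℕ) := by
      have h1 : x ^ n ≤ (y ^ a) ^ n := pow_le_pow_left₀ hx hxy n
      have h2 : (y ^ a) ^ n = y ^ (a * n) := by
        rw [← Real.rpow_natCast (y ^ a) n, ← Real.rpow_mul hy0.le]
      have h3 : y ^ (a * (n:ℝ)) ≤ y ^ ((m:ℝ) + (2 - μ)) := by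
        apply Real.rpow_le_rpow_of_exponent_le hy1
        have : a * (n:ℝ) = z - μ := by rw [hzdef]; ring
        rw [this]; linarith
      have h4 : y ^ ((m:ℝ) + (2 - μ)) = y ^ (2 - μ) * y ^ (m:ℕ) := by
        rw [Real.rpow_add hy0, Real.rpow_natCast]; ring
      calc x ^ n ≤ (y ^ a) ^ n := h1
        _ = y ^ (a * (n:ℝ)) := h2
        _ ≤ y ^ ((m:ℝ) + (2 - μ)) := h3
        _ = y ^ (2 - μ) * y ^ (m:ℕ) := h4
    -- y ^ m / m! ≤ exp (2y) * (1/2)^m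
    have hym : y ^ (m:ℕ) / m.factorial ≤ Real.exp (2*y) * (1/2:ℝ) ^ (m:ℕ) := by
      have h1 : (2*y) ^ (m:ℕ) / m.factorial ≤ Real.exp (2*y) :=
        Real.pow_div_factorial_le_exp (x := 2*y) (by linarith) m
      have h2 : (2*y) ^ (m:ℕ) = 2 ^ (m:ℕ) * y ^ (m:ℕ) := mul_pow 2 y m
      rw [h2] at h1
      have h3 : y ^ (m:ℕ) / m.factorial ≤ Real.exp (2*y) / 2 ^ (m:ℕ) := by
        rw [div_le_div_iff₀ hfac0 (by positivity)]
        calc y ^ (m:ℕ) * 2 ^ (m:ℕ) = 2 ^ (m:ℕ) * y ^ (m:ℕ) := by ring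
          _ ≤ Real.exp (2*y) * m.factorial := by
              rw [div_le_iff₀ hfac0] at h1; linarith
      calc y ^ (m:ℕ) / m.factorial ≤ Real.exp (2*y) / 2 ^ (m:ℕ) := h3
        _ = Real.exp (2*y) * (1/2:ℝ) ^ (m:ℕ) := by
            rw [div_pow, one_pow, mul_one_div]
    -- (1/2)^m ≤ (1/2)^(μ-2) * ρ^n
    have hhalf : ((1/2:ℝ)) ^ (m:ℕ) ≤ (1/2:ℝ) ^ (μ - 2) * ρ ^ ((n:ℕ):ℝ) := by
      have h1 : ((1/2:ℝ)) ^ (m:ℕ) = (1/2:ℝ) ^ ((m:ℕ):ℝ) := (Real.rpow_natCast _ _).symm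
      have h2 : (1/2:ℝ) ^ ((m:ℕ):ℝ) ≤ (1/2:ℝ) ^ (a * n + μ - 2) := by
        apply Real.rpow_le_rpow_of_exponent_ge (by norm_num) (by norm_num)
        have : z ≤ (m:ℝ) + 2 := hmz2
        rw [hzdef] at this; linarith
      have h3 : (1/2:ℝ) ^ (a * (n:ℝ) + μ - 2) = (1/2:ℝ) ^ (μ - 2) * ρ ^ ((n:ℕ):ℝ) := by
        rw [hρ, ← Real.rpow_mul (by norm_num : (0:ℝ) ≤ 1/2),
          ← Real.rpow_add (by norm_num : (0:ℝ) < 1/2)]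
        congr 1
        ring
      rw [h1]
      exact h2.trans (le_of_eq h3)
    calc x ^ n / Real.Gamma z ≤ x ^ n / m.factorial := hstep1
      _ = x ^ n * (1 / m.factorial) := by rw [mul_one_div]
      _ ≤ (y ^ (2 - μ) * y ^ (m:ℕ)) * (1/m.factorial) := by
          apply mul_le_mul_of_nonneg_right hxn (by positivity)
      _ = y ^ (2 - μ) * (y ^ (m:ℕ) / m.factorial) := by ring
      _ ≤ y ^ (2 - μ) * (Real.exp (2*y) * (1/2:ℝ) ^ (m:ℕ)) := by
          apply mul_le_mul_of_nonneg_left hym (by positivity)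
      _ ≤ y ^ (2 - μ) * (Real.exp (2*y) * ((1/2:ℝ) ^ (μ - 2) * ρ ^ ((n:ℕ):ℝ))) := by
          apply mul_le_mul_of_nonneg_left (mul_le_mul_of_nonneg_left hhalf (by positivity)) (by positivity)
      _ = K * ρ ^ ((n:ℕ):ℝ) := by rw [hK]; ring
      _ = (K * ρ ^ N) * ρ ^ k := by
          rw [Real.rpow_natCast, hn, pow_add]; ring
  apply Summable.of_nonneg_of_le (fun k => ?_) (fun k => ?_) ((summable_geometric_of_lt_one hρ0.le hρ1).mul_left (K * ρ ^ N))
  · apply div_nonneg (pow_nonneg hx _)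
    exact (Real.Gamma_pos_of_pos (by
      have h1 : (2 - μ)/a ≤ (N:ℝ) := Nat.le_ceil _
      have h2 : (N:ℝ) ≤ ((k + N : ℕ):ℝ) := by exact_mod_cast Nat.le_add_left N k
      have := (div_le_iff₀ ha).1 (h1.trans h2)
      push_cast at this ⊢
      linarith)).le
  · exact key k


noncomputable def mlD (α lam : ℝ) (k : ℕ) (s : ℝ) : ℝ :=
  (-lam) ^ k * s ^ (α * k - 1) / Real.Gamma (α * k)

lemma ML.fac {α : ℝ} (hα : 0 < α) (k : ℕ) :
    (α * k) / Real.Gamma (α * k + 1) = 1 / Real.Gamma (α * k) := by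
  cases k with
  | zero => simp [Real.Gamma_zero]
  | succ n =>
      have hne : α * ((n:ℕ)+1 : ℕ) ≠ 0 := by positivity
      rw [Real.Gamma_add_one hne]
      have hG : Real.Gamma (α * ((n:ℕ)+1 : ℕ)) ≠ 0 :=
        (Real.Gamma_pos_of_pos (by positivity)).ne'
      field_simp

lemma ML.pow_eq {α lam : ℝ} (k : ℕ) {v : ℝ} (hv : 0 ≤ v) :
    (-(lam * v ^ α)) ^ k = (-lam) ^ k * v ^ (α * k) := by
  rw [Real.rpow_mul hv, Real.rpow_natCast, ← mul_pow, neg_mul]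

lemma ML.hasDerivAt {α lam : ℝ} (h0 : 0 < α) (hlam : 0 < lam) {r : ℝ} (hr : 0 < r) :
    HasDerivAt (fun s : ℝ => mittagLefflerReal α 1 (-(lam * s ^ α)))
      (∑' k : ℕ, mlD α lam k r) r := by
  set a : ℝ := r / 2 with ha
  set b : ℝ := r + 1 with hb
  have ha0 : 0 < a := by positivity
  have hab : a < b := by rw [ha, hb]; linarith
  have hb0 : 0 < b := lt_trans ha0 hab
  set g : ℕ → ℝ → ℝ := fun k s => (-(lam * s ^ α)) ^ k / Real.Gamma (α * k + 1) with hg_def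
  set u : ℕ → ℝ := fun k => a⁻¹ * ((lam * b ^ α) ^ k / Real.Gamma (α * k)) with hu_def
  have hu : Summable u := by
    apply Summable.mul_left
    have := ML.summable h0 0 (lam * b ^ α) (by positivity)
    simpa using this
  have hg : ∀ k s, s ∈ Set.Ioo a b → HasDerivAt (g k) (mlD α lam k s) s := by
    intro k s hs
    have hs0 : 0 < s := lt_trans ha0 hs.1
    have hrp : HasDerivAt (fun v : ℝ => v ^ (α * k)) ((α * k) * s ^ (α * k - 1)) s :=
      Real.hasDerivAt_rpow_const (Or.inl hs0.ne')
    have h1 : HasDerivAt (fun v : ℝ => (-lam) ^ k * v ^ (α * k) / Real.Gamma (α * k + 1))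
        (mlD α lam k s) s := by
      have h2 := (hrp.const_mul ((-lam) ^ k)).div_const (Real.Gamma (α * k + 1))
      convert h2 using 1
      case e'_4 => rfl
      case e'_5 => rfl
      rw [mlD, div_eq_mul_one_div ((-lam)^k * s ^ (α * k - 1)), ← ML.fac h0 k]
      field_simp
    apply h1.congr_of_eventuallyEq
    filter_upwards [eventually_gt_nhds hs0] with v hv
    rw [hg_def]
    simp only
    rw [ML.pow_eq k hv.le]
  have hbound : ∀ k s, s ∈ Set.Ioo a b → ‖mlD α lam k s‖ ≤ u k := by
    intro k s hs
    have hs0 : 0 < s := lt_trans ha0 hs.1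
    cases k with
    | zero => simp [mlD, u, Real.Gamma_zero]
    | succ n =>
        set k : ℕ := n + 1 with hk
        have hαk : 0 < α * k := by positivity
        have hG : 0 < Real.Gamma (α * k) := Real.Gamma_pos_of_pos hαk
        have h1 : ‖mlD α lam k s‖ = lam ^ k * s ^ (α * k - 1) / Real.Gamma (α * k) := by
          rw [mlD, norm_div, Real.norm_eq_abs, Real.norm_eq_abs, abs_of_pos hG, abs_mul,
            abs_pow, abs_neg, abs_of_pos hlam, abs_of_pos (Real.rpow_pos_of_pos hs0 _)]
        rw [h1, hu_def]
        simp only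
        have h2 : s ^ (α * k - 1) ≤ b ^ (α * k) * a⁻¹ := by
          rw [Real.rpow_sub_one hs0.ne']
          apply mul_le_mul (Real.rpow_le_rpow hs0.le (le_of_lt hs.2) hαk.le)
            ?_ (by positivity) (by positivity)
          rw [← one_div, ← one_div]
          exact one_div_le_one_div_of_le ha0 hs.1.le
        have h3 : (lam * b ^ α) ^ k = lam ^ k * b ^ (α * k) := by
          rw [mul_pow, ← Real.rpow_natCast (b ^ α), ← Real.rpow_mul hb0.le]
        rw [h3]
        calc lam ^ k * s ^ (α * k - 1) / Real.Gamma (α * k)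
            ≤ lam ^ k * (b ^ (α * k) * a⁻¹) / Real.Gamma (α * k) := by gcongr
          _ = a⁻¹ * (lam ^ k * b ^ (α * k) / Real.Gamma (α * k)) := by ring
  have hy₀ : r ∈ Set.Ioo a b := ⟨by rw [ha]; linarith, by rw [hb]; linarith⟩
  have hg0 : Summable fun k => g k r := by
    have h := ML.summable h0 1 (lam * r ^ α) (by positivity)
    rw [← summable_abs_iff]
    have heq : ∀ k : ℕ, |g k r| = (lam * r ^ α) ^ k / Real.Gamma (α * k + 1) := by
      intro k
      have hG : 0 < Real.Gamma (α * k + 1) := Real.Gamma_pos_of_pos (by positivity)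
      rw [hg_def]
      simp only
      rw [abs_div, abs_of_pos hG, abs_pow, abs_neg,
        abs_of_pos (by positivity : 0 < lam * r ^ α)]
    exact h.congr fun k => (heq k).symm
  have := hasDerivAt_tsum_of_isPreconnected hu isOpen_Ioo isPreconnected_Ioo hg hbound
    hy₀ hg0 hy₀
  simpa only [mittagLefflerReal] using this


lemma ML.beta {u v : ℝ} (hu : 0 < u) (hv : 0 < v) :
    ∫ x in (0:ℝ)..1, x ^ (u - 1) * (1 - x) ^ (v - 1)
      = Real.Gamma u * Real.Gamma v / Real.Gamma (u + v) := by
  have hc := Complex.Gamma_mul_Gamma_eq_betaIntegral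
    (s := (u:ℂ)) (t := (v:ℂ)) (by simpa using hu) (by simpa using hv)
  have hbeta : Complex.betaIntegral (u:ℂ) (v:ℂ)
      = ((∫ x in (0:ℝ)..1, x ^ (u - 1) * (1 - x) ^ (v - 1) : ℝ) : ℂ) := by
    rw [Complex.betaIntegral, ← intervalIntegral.integral_ofReal]
    apply intervalIntegral.integral_congr
    intro x hx
    rw [Set.uIcc_of_le (by norm_num : (0:ℝ) ≤ 1)] at hx
    obtain ⟨hx0, hx1⟩ := hx
    show (x:ℂ) ^ ((u:ℂ) - 1) * (1 - (x:ℂ)) ^ ((v:ℂ) - 1)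
      = ((x ^ (u - 1) * (1 - x) ^ (v - 1) : ℝ) : ℂ)
    rw [Complex.ofReal_mul, Complex.ofReal_cpow hx0,
      Complex.ofReal_cpow (by linarith : (0:ℝ) ≤ 1 - x)]
    push_cast
    ring
  rw [hbeta, Complex.Gamma_ofReal, Complex.Gamma_ofReal, ← Complex.ofReal_add,
    Complex.Gamma_ofReal, ← Complex.ofReal_mul, ← Complex.ofReal_mul] at hc
  have hreal := Complex.ofReal_inj.1 hc
  have hG : 0 < Real.Gamma (u + v) := Real.Gamma_pos_of_pos (by linarith)
  rw [eq_div_iff hG.ne']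
  linear_combination -hreal

lemma ML.beta_scaled {α t bb : ℝ} (hα1 : α < 1) (ht : 0 < t) (hbb : 0 < bb) :
    ∫ r in (0:ℝ)..t, r ^ (bb - 1) * (t - r) ^ (-α)
      = t ^ (bb - α) * (Real.Gamma bb * Real.Gamma (1 - α) / Real.Gamma (bb + (1 - α))) := by
  have h1 := intervalIntegral.integral_comp_mul_left
    (fun r => r ^ (bb - 1) * (t - r) ^ (-α)) ht.ne' (a := 0) (b := 1)
  simp only [mul_zero, mul_one] at h1
  have h2 : ∫ x in (0:ℝ)..1, (t * x) ^ (bb - 1) * (t - t * x) ^ (-α)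
      = t ^ (bb - 1) * t ^ (-α) * ∫ x in (0:ℝ)..1, x ^ (bb - 1) * (1 - x) ^ ((1 - α) - 1) := by
    rw [← intervalIntegral.integral_const_mul]
    apply intervalIntegral.integral_congr
    intro x hx
    rw [Set.uIcc_of_le (by norm_num : (0:ℝ) ≤ 1)] at hx
    obtain ⟨hx0, hx1⟩ := hx
    have e1 : (t * x) ^ (bb - 1) = t ^ (bb - 1) * x ^ (bb - 1) :=
      Real.mul_rpow ht.le hx0
    have e2 : (t - t * x) ^ (-α) = t ^ (-α) * (1 - x) ^ (-α) := by
      rw [show t - t * x = t * (1 - x) by ring, Real.mul_rpow ht.le (by linarith)]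
    show (t * x) ^ (bb - 1) * (t - t * x) ^ (-α)
      = t ^ (bb - 1) * t ^ (-α) * (x ^ (bb - 1) * (1 - x) ^ ((1 - α) - 1))
    rw [e1, e2, show (1 - α) - 1 = -α by ring]
    ring
  rw [h2, ML.beta hbb (by linarith : (0:ℝ) < 1 - α)] at h1
  have h3 : (t:ℝ) ≠ 0 := ht.ne'
  rw [smul_eq_mul] at h1
  have h5 : (∫ r in (0:ℝ)..t, r ^ (bb - 1) * (t - r) ^ (-α))
      = t * (t ^ (bb - 1) * t ^ (-α) * (Real.Gamma bb * Real.Gamma (1 - α) / Real.Gamma (bb + (1 - α)))) := by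
    calc (∫ r in (0:ℝ)..t, r ^ (bb - 1) * (t - r) ^ (-α))
        = t * (t⁻¹ * ∫ r in (0:ℝ)..t, r ^ (bb - 1) * (t - r) ^ (-α)) := by
          rw [← mul_assoc, mul_inv_cancel₀ h3, one_mul]
      _ = _ := by rw [← h1]
  rw [h5]
  have h4 : t * (t ^ (bb - 1) * t ^ (-α)) = t ^ (bb - α) := by
    have e : t * (t ^ (bb - 1) * t ^ (-α)) = t ^ (1:ℝ) * (t ^ (bb - 1) * t ^ (-α)) := by
      rw [Real.rpow_one]
    rw [e, ← Real.rpow_add ht, ← Real.rpow_add ht]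
    congr 1
    ring
  calc t * (t ^ (bb - 1) * t ^ (-α) * (Real.Gamma bb * Real.Gamma (1 - α) / Real.Gamma (bb + (1 - α))))
      = t * (t ^ (bb - 1) * t ^ (-α)) * (Real.Gamma bb * Real.Gamma (1 - α) / Real.Gamma (bb + (1 - α))) := by ring
    _ = _ := by rw [h4]

lemma ML.integrableOn {α t bb : ℝ} (hα0 : 0 < α) (hα1 : α < 1) (ht : 0 < t) (hbb : 0 < bb) :
    IntegrableOn (fun r => r ^ (bb - 1) * (t - r) ^ (-α)) (Set.Ioo 0 t) := by
  have hcont : ContinuousOn (fun r : ℝ => r ^ (bb - 1) * (t - r) ^ (-α)) (Set.Ioo 0 t) := by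
    intro r hr
    apply ContinuousWithinAt.mul
    · exact (Real.continuousAt_rpow_const r (bb - 1) (Or.inl hr.1.ne')).continuousWithinAt
    · exact ((Real.continuousAt_rpow_const (t - r) (-α)
        (Or.inl (by have := hr.2; intro h; rw [sub_eq_zero] at h; linarith))).comp
        ((continuous_const.sub continuous_id).continuousAt)).continuousWithinAt
  have part1 : IntegrableOn (fun r => r ^ (bb - 1) * (t - r) ^ (-α)) (Set.Ioc 0 (t/2)) := by
    have base : IntegrableOn (fun r : ℝ => (t/2) ^ (-α) * r ^ (bb - 1)) (Set.Ioc 0 (t/2)) := by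
      have h := (intervalIntegral.intervalIntegrable_rpow' (a := 0) (b := t/2)
        (by linarith : (-1:ℝ) < bb - 1)).const_mul ((t/2) ^ (-α))
      rwa [intervalIntegrable_iff_integrableOn_Ioc_of_le (by linarith)] at h
    apply base.mono' ((hcont.mono (by
        intro x hx
        exact ⟨hx.1, lt_of_le_of_lt hx.2 (by linarith)⟩)).aestronglyMeasurable measurableSet_Ioc)
    filter_upwards [ae_restrict_mem measurableSet_Ioc] with r hr
    obtain ⟨hr0, hr2⟩ := hr
    have hb1 : (t - r) ^ (-α) ≤ (t/2) ^ (-α) :=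
      Real.rpow_le_rpow_of_nonpos (by linarith) (by linarith) (by linarith)
    rw [Real.norm_eq_abs,
      abs_of_nonneg (mul_nonneg (Real.rpow_nonneg hr0.le _) (Real.rpow_nonneg (by linarith) _))]
    calc r ^ (bb - 1) * (t - r) ^ (-α) ≤ r ^ (bb - 1) * (t/2) ^ (-α) :=
          mul_le_mul_of_nonneg_left hb1 (by positivity)
      _ = (t/2) ^ (-α) * r ^ (bb - 1) := by ring
  have part2 : IntegrableOn (fun r => r ^ (bb - 1) * (t - r) ^ (-α)) (Set.Ioo (t/2) t) := by
    set C : ℝ := (t/2) ^ (bb - 1) + t ^ (bb - 1) with hC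
    have base : IntegrableOn (fun r : ℝ => C * (t - r) ^ (-α)) (Set.Ioo (t/2) t) := by
      have h0 : IntervalIntegrable (fun u : ℝ => u ^ (-α)) volume 0 (t/2) :=
        intervalIntegral.intervalIntegrable_rpow' (by linarith)
      have h := ((h0.comp_sub_left t).symm.const_mul C)
      rw [sub_zero, show t - t/2 = t/2 by ring] at h
      rw [intervalIntegrable_iff_integrableOn_Ioc_of_le (by linarith)] at h
      exact h.mono_set Set.Ioo_subset_Ioc_self
    apply base.mono' ((hcont.mono (by
        intro x hx
        exact ⟨lt_trans (by linarith) hx.1, hx.2⟩)).aestronglyMeasurable measurableSet_Ioo)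
    filter_upwards [ae_restrict_mem measurableSet_Ioo] with r hr
    obtain ⟨hr0, hr2⟩ := hr
    have hrpos : 0 < r := lt_trans (by linarith) hr0
    have hb1 : r ^ (bb - 1) ≤ C := by
      rcases le_or_gt bb 1 with h | h
      · have : r ^ (bb - 1) ≤ (t/2) ^ (bb - 1) :=
          Real.rpow_le_rpow_of_nonpos (by positivity) hr0.le (by linarith)
        have ht' : (0:ℝ) ≤ t ^ (bb - 1) := Real.rpow_nonneg ht.le _
        rw [hC]; linarith
      · have : r ^ (bb - 1) ≤ t ^ (bb - 1) :=
          Real.rpow_le_rpow hrpos.le hr2.le (by linarith)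
        have ht' : (0:ℝ) ≤ (t/2) ^ (bb - 1) := Real.rpow_nonneg (by positivity) _
        rw [hC]; linarith
    rw [Real.norm_eq_abs,
      abs_of_nonneg (mul_nonneg (Real.rpow_nonneg hrpos.le _) (Real.rpow_nonneg (by linarith) _))]
    exact mul_le_mul_of_nonneg_right hb1 (Real.rpow_nonneg (by linarith) _)
  have hu := part1.union part2
  rwa [Set.Ioc_union_Ioo_eq_Ioo (by linarith) (by linarith)] at hu

lemma ML.int_ible {α t bb : ℝ} (c : ℝ) (hα0 : 0 < α) (hα1 : α < 1) (ht : 0 < t) (hbb : 0 < bb) :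
    IntegrableOn (fun r => (t - r) ^ (-α) * (c * r ^ (bb - 1) / Real.Gamma bb)) (Set.Ioo 0 t) := by
  have h := (ML.integrableOn hα0 hα1 ht hbb).const_mul (c / Real.Gamma bb)
  apply h.congr
  apply Filter.Eventually.of_forall
  intro r
  show c / Real.Gamma bb * (r ^ (bb - 1) * (t - r) ^ (-α))
    = (t - r) ^ (-α) * (c * r ^ (bb - 1) / Real.Gamma bb)
  ring

lemma ML.int_eval {α t bb : ℝ} (c : ℝ) (hα0 : 0 < α) (hα1 : α < 1) (ht : 0 < t) (hbb : 0 < bb) :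
    ∫ r in Set.Ioo 0 t, (t - r) ^ (-α) * (c * r ^ (bb - 1) / Real.Gamma bb)
      = c * t ^ (bb - α) * Real.Gamma (1 - α) / Real.Gamma (bb + (1 - α)) := by
  have hG : 0 < Real.Gamma bb := Real.Gamma_pos_of_pos hbb
  have h1 : ∫ r in Set.Ioo 0 t, (t - r) ^ (-α) * (c * r ^ (bb - 1) / Real.Gamma bb)
      = ∫ r in Set.Ioo 0 t, (c / Real.Gamma bb) * (r ^ (bb - 1) * (t - r) ^ (-α)) := by
    apply setIntegral_congr_fun measurableSet_Ioo
    intro r _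
    ring
  rw [h1, MeasureTheory.integral_const_mul, ← MeasureTheory.integral_Ioc_eq_integral_Ioo,
    ← intervalIntegral.integral_of_le ht.le, ML.beta_scaled hα1 ht hbb]
  have hG2 : Real.Gamma (bb + (1 - α)) ≠ 0 :=
    (Real.Gamma_pos_of_pos (by linarith)).ne'
  field_simp [hG.ne', hG2]

lemma ML.summable_neg {a x : ℝ} (ha : 0 < a) (hx : 0 ≤ x) :
    Summable fun k : ℕ => (-x) ^ k / Real.Gamma (a * k + 1) := by
  rw [← summable_abs_iff]
  refine (ML.summable ha 1 x hx).congr fun k => ?_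
  have hG : 0 < Real.Gamma (a * k + 1) := Real.Gamma_pos_of_pos (by positivity)
  rw [abs_div, abs_of_pos hG, abs_pow, abs_neg, abs_of_nonneg hx]

lemma ML.ennnorm_tsum_le (f : ℕ → ℝ) :
    ((‖∑' k, f k‖₊ : NNReal) : ENNReal) ≤ ∑' k, ((‖f k‖₊ : NNReal) : ENNReal) := by
  by_cases h : Summable fun k => ‖f k‖₊
  · rw [← ENNReal.coe_tsum h]
    exact_mod_cast nnnorm_tsum_le h
  · have htop : (∑' k, ((‖f k‖₊ : NNReal) : ENNReal)) = ⊤ := by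
      by_contra h'
      exact h (ENNReal.tsum_coe_ne_top_iff_summable.1 h')
    rw [htop]
    exact le_top


/-- Let `0 < α < 1` and `λ > 0`, and set `e(r) = E_{α,1}(−λ r^α)`. Then `e` is
differentiable on `(0,∞)`, for every `t > 0` the function `r ↦ (t−r)^{−α} e'(r)` is
integrable on `(0,t)`, and the Caputo derivative of `e` of order `α` satisfies
`(1/Γ(1−α)) ∫_0^t (t−r)^{−α} e'(r) dr = −λ E_{α,1}(−λ t^α)` for all `t > 0`. -/
theorem caputo_mittagLeffler (α lam : ℝ) (h0 : 0 < α) (h1 : α < 1) (hlam : 0 < lam) :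
    (∀ r : ℝ, 0 < r →
        DifferentiableAt ℝ (fun s : ℝ => mittagLefflerReal α 1 (-(lam * s ^ α))) r) ∧
    ∀ t : ℝ, 0 < t →
      IntegrableOn
        (fun r : ℝ => (t - r) ^ (-α) *
          deriv (fun s : ℝ => mittagLefflerReal α 1 (-(lam * s ^ α))) r)
        (Set.Ioo 0 t) ∧
      (1 / Real.Gamma (1 - α)) *
          (∫ r in Set.Ioo 0 t, (t - r) ^ (-α) *
            deriv (fun s : ℝ => mittagLefflerReal α 1 (-(lam * s ^ α))) r)
        = -(lam * mittagLefflerReal α 1 (-(lam * t ^ α))) := by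
  constructor
  · intro r hr
    exact (ML.hasDerivAt h0 hlam hr).differentiableAt
  intro t ht
  set e : ℝ → ℝ := fun s : ℝ => mittagLefflerReal α 1 (-(lam * s ^ α)) with he
  set h : ℕ → ℝ → ℝ := fun k r => (t - r) ^ (-α) * mlD α lam k r with hh
  have h0eq : ∀ r, h 0 r = 0 := by
    intro r
    simp [hh, mlD, Real.Gamma_zero]
  have hcast : ∀ n : ℕ, (0:ℝ) < ((n+1 : ℕ) : ℝ) := by
    intro n; exact_mod_cast Nat.succ_pos n
  have hbb : ∀ n : ℕ, 0 < α * ((n+1 : ℕ) : ℝ) := fun n => mul_pos h0 (hcast n)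
  -- integrability of each h k
  have hI : ∀ k, IntegrableOn (h k) (Set.Ioo 0 t) := by
    intro k
    cases k with
    | zero =>
        have : h 0 = fun _ : ℝ => (0:ℝ) := funext h0eq
        rw [this]
        exact integrableOn_zero
    | succ n =>
        have hint := ML.int_ible (α := α) (t := t) (bb := α * ((n+1:ℕ):ℝ))
          ((-lam) ^ (n+1)) h0 h1 ht (hbb n)
        apply hint.congr
        apply Filter.Eventually.of_forall
        intro r
        show (t - r) ^ (-α) * ((-lam) ^ (n+1) * r ^ (α * ((n+1:ℕ):ℝ) - 1)
          / Real.Gamma (α * ((n+1:ℕ):ℝ))) = h (n+1) r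
        simp only [hh, mlD]
  -- value of each h (n+1)
  have hV : ∀ n : ℕ, (∫ r in Set.Ioo 0 t, h (n+1) r)
      = Real.Gamma (1-α) * ((-lam) * ((-(lam * t ^ α)) ^ n / Real.Gamma (α * n + 1))) := by
    intro n
    have heval := ML.int_eval (α := α) (t := t) (bb := α * ((n+1:ℕ):ℝ))
      ((-lam) ^ (n+1)) h0 h1 ht (hbb n)
    have hfun : (∫ r in Set.Ioo 0 t, h (n+1) r)
        = ∫ r in Set.Ioo 0 t, (t - r) ^ (-α) * ((-lam) ^ (n+1)
            * r ^ (α * ((n+1:ℕ):ℝ) - 1) / Real.Gamma (α * ((n+1:ℕ):ℝ))) := by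
      apply setIntegral_congr_fun measurableSet_Ioo
      intro r _
      simp only [hh, mlD]
    rw [hfun, heval]
    have e1 : α * ((n+1:ℕ):ℝ) + (1 - α) = α * n + 1 := by push_cast; ring
    have e2 : α * ((n+1:ℕ):ℝ) - α = α * n := by push_cast; ring
    rw [e1, e2]
    have e3 : t ^ (α * (n:ℝ)) = (t ^ α) ^ n := by
      rw [← Real.rpow_natCast (t ^ α) n, ← Real.rpow_mul ht.le]
    rw [e3, show (-(lam * t ^ α)) ^ n = (-lam) ^ n * (t ^ α) ^ n from by
      rw [← mul_pow]; congr 1; ring, pow_succ]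
    ring
  -- norm bound for lintegrals
  set cA : ℕ → ℝ := fun k => lam ^ k * t ^ (α * (k:ℝ) - α) * Real.Gamma (1-α)
    / Real.Gamma (α * (k:ℝ) + (1-α)) with hcA
  have hN : ∀ k, (∫⁻ r in Set.Ioo 0 t, (‖h k r‖₊ : ENNReal)) ≤ ENNReal.ofReal (cA k) := by
    intro k
    cases k with
    | zero =>
        have : ∀ r, (‖h 0 r‖₊ : ENNReal) = 0 := by
          intro r; rw [h0eq r]; simp
        calc (∫⁻ r in Set.Ioo 0 t, (‖h 0 r‖₊ : ENNReal)) = 0 := by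
              simp only [this, lintegral_const, zero_mul]
          _ ≤ _ := zero_le
    | succ n =>
        have hGb : 0 < Real.Gamma (α * ((n+1:ℕ):ℝ)) := Real.Gamma_pos_of_pos (hbb n)
        have hnorm : (∫ r in Set.Ioo 0 t, ‖h (n+1) r‖)
            = ∫ r in Set.Ioo 0 t, (t - r) ^ (-α) * ((lam : ℝ) ^ (n+1)
                * r ^ (α * ((n+1:ℕ):ℝ) - 1) / Real.Gamma (α * ((n+1:ℕ):ℝ))) := by
          apply setIntegral_congr_fun measurableSet_Ioo
          intro r hr
          show ‖h (n+1) r‖ = _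
          rw [hh]
          simp only
          rw [Real.norm_eq_abs, abs_mul, abs_of_nonneg (Real.rpow_nonneg (by linarith [hr.2] : (0:ℝ) ≤ t - r) _)]
          show (t-r) ^ (-α) * |(-lam) ^ (n+1) * r ^ (α * ((n+1:ℕ):ℝ) - 1) / Real.Gamma (α * ((n+1:ℕ):ℝ))| = _
          rw [abs_div, abs_of_pos hGb, abs_mul, abs_pow, abs_neg, abs_of_pos hlam,
            abs_of_nonneg (Real.rpow_nonneg hr.1.le _)]
        have heval := ML.int_eval (α := α) (t := t) (bb := α * ((n+1:ℕ):ℝ))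
          ((lam : ℝ) ^ (n+1)) h0 h1 ht (hbb n)
        have hval : (∫ r in Set.Ioo 0 t, ‖h (n+1) r‖) = cA (n+1) := by
          rw [hnorm, heval, hcA]
        simp only [← enorm_eq_nnnorm]
        rw [← ofReal_integral_norm_eq_lintegral_enorm (hI (n+1)), hval]
  have hcA_nonneg : ∀ k, 0 ≤ cA k := by
    intro k
    rw [hcA]
    have hG1 : 0 < Real.Gamma (1 - α) := Real.Gamma_pos_of_pos (by linarith)
    have hG2 : 0 ≤ Real.Gamma (α * (k:ℝ) + (1-α)) := by
      refine (Real.Gamma_pos_of_pos ?_).le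
      have hk0 : (0:ℝ) ≤ α * (k:ℝ) := by positivity
      linarith
    positivity
  have hSumA : Summable cA := by
    have hbase := (ML.summable h0 (1-α) (lam * t ^ α) (by positivity)).mul_left
      (t ^ (-α) * Real.Gamma (1-α))
    apply hbase.congr
    intro k
    rw [hcA]
    simp only
    have e1 : t ^ (α * (k:ℝ) - α) = t ^ (α * (k:ℝ)) * t ^ (-α) := by
      rw [sub_eq_add_neg, Real.rpow_add ht]
    have e2 : (lam * t ^ α) ^ k = lam ^ k * t ^ (α * (k:ℝ)) := by
      rw [mul_pow, ← Real.rpow_natCast (t ^ α) k, ← Real.rpow_mul ht.le, mul_comm α (k:ℝ)]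
    rw [e2, e1]
    ring
  have hfin : (∑' k, ∫⁻ r in Set.Ioo 0 t, (‖h k r‖₊ : ENNReal)) ≠ ⊤ := by
    apply ne_top_of_le_ne_top ?_ (ENNReal.tsum_le_tsum hN)
    rw [← ENNReal.ofReal_tsum_of_nonneg hcA_nonneg hSumA]
    exact ENNReal.ofReal_ne_top
  -- pointwise identification of the integrand
  have hEqOn : Set.EqOn (fun r => (t - r) ^ (-α) * deriv e r)
      (fun r => ∑' k, h k r) (Set.Ioo 0 t) := by
    intro r hr
    have hd := (ML.hasDerivAt h0 hlam hr.1).deriv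
    show (t - r) ^ (-α) * deriv e r = ∑' k, h k r
    rw [show deriv e r = ∑' k, mlD α lam k r from hd]
    exact (tsum_mul_left (a := (t - r) ^ (-α)) (f := fun k => mlD α lam k r)).symm
  have hASM : AEStronglyMeasurable (fun r => (t - r) ^ (-α) * deriv e r)
      (volume.restrict (Set.Ioo 0 t)) := by
    apply AEStronglyMeasurable.mul
    · apply ContinuousOn.aestronglyMeasurable ?_ measurableSet_Ioo
      intro r hr
      exact ((Real.continuousAt_rpow_const (t - r) (-α)
        (Or.inl (by have := hr.2; intro hc; rw [sub_eq_zero] at hc; linarith))).comp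
        ((continuous_const.sub continuous_id).continuousAt)).continuousWithinAt
    · exact (measurable_deriv e).aestronglyMeasurable.restrict
  have hIok : IntegrableOn (fun r => (t - r) ^ (-α) * deriv e r) (Set.Ioo 0 t) := by
    refine ⟨hASM, ?_⟩
    show (∫⁻ r in Set.Ioo 0 t, (‖(t - r) ^ (-α) * deriv e r‖₊ : ENNReal)) < ⊤
    have step1 : (∫⁻ r in Set.Ioo 0 t, (‖(t - r) ^ (-α) * deriv e r‖₊ : ENNReal))
        = ∫⁻ r in Set.Ioo 0 t, (‖∑' k, h k r‖₊ : ENNReal) := by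
      apply lintegral_congr_ae
      filter_upwards [ae_restrict_mem measurableSet_Ioo] with r hr
      rw [show (t - r) ^ (-α) * deriv e r = ∑' k, h k r from hEqOn hr]
    calc (∫⁻ r in Set.Ioo 0 t, (‖(t - r) ^ (-α) * deriv e r‖₊ : ENNReal))
        = ∫⁻ r in Set.Ioo 0 t, (‖∑' k, h k r‖₊ : ENNReal) := step1
      _ ≤ ∫⁻ r in Set.Ioo 0 t, ∑' k, (‖h k r‖₊ : ENNReal) :=
          lintegral_mono fun r => ML.ennnorm_tsum_le _
      _ = ∑' k, ∫⁻ r in Set.Ioo 0 t, (‖h k r‖₊ : ENNReal) :=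
          lintegral_tsum fun k => (hI k).aestronglyMeasurable.enorm
      _ < ⊤ := hfin.lt_top
  refine ⟨hIok, ?_⟩
  have hw : Summable (fun n : ℕ => Real.Gamma (1-α) * ((-lam)
      * ((-(lam * t ^ α)) ^ n / Real.Gamma (α * n + 1)))) := by
    exact (((ML.summable_neg h0 (by positivity : (0:ℝ) ≤ lam * t ^ α)).mul_left
      (-lam)).mul_left (Real.Gamma (1-α)))
  have hSumInt : Summable (fun k => ∫ r in Set.Ioo 0 t, h k r) := by
    rw [← summable_nat_add_iff 1]
    exact hw.congr fun n => (hV n).symm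
  have hint : (∫ r in Set.Ioo 0 t, (t - r) ^ (-α) * deriv e r)
      = ∑' k, ∫ r in Set.Ioo 0 t, h k r := by
    rw [setIntegral_congr_fun measurableSet_Ioo hEqOn]
    exact integral_tsum (fun k => (hI k).aestronglyMeasurable) hfin
  rw [hint, Summable.tsum_eq_zero_add hSumInt]
  have hz : (∫ r in Set.Ioo 0 t, h 0 r) = 0 := by
    have : h 0 = fun _ : ℝ => (0:ℝ) := funext h0eq
    rw [this]
    simp
  rw [hz, zero_add, tsum_congr hV, tsum_mul_left, tsum_mul_left]
  have hE : (∑' n : ℕ, (-(lam * t ^ α)) ^ n / Real.Gamma (α * n + 1))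
      = mittagLefflerReal α 1 (-(lam * t ^ α)) := rfl
  rw [hE]
  have hG1 : Real.Gamma (1 - α) ≠ 0 := (Real.Gamma_pos_of_pos (by linarith)).ne'
  field_simp
end

section
/- Let 1 < α < 2 and λ > 0, and set e(r) = E_{α,1}(−λ r^α) for r ≥ 0. Then e is twice differentiable on (0, ∞), for every t > 0 the function r ↦ (t − r)^{1−α} e''(r) is integrable on (0, t), and (1/Γ(2−α)) ∫_0^t (t − r)^{1−α} e''(r) dr = −λ E_{α,1}(−λ t^α) for all t > 0. -/
open MeasureTheory
open Filter Set

-- Gamma growth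
lemma gamma_growth {α x : ℝ} (h1 : 1 < α) (hx : 1 ≤ x) :
    x * Real.Gamma x ≤ Real.Gamma (x + α) := by
  have h0 : (0:ℝ) < x := lt_of_lt_of_le one_pos hx
  have e1 : x * Real.Gamma x = Real.Gamma (x + 1) := (Real.Gamma_add_one h0.ne').symm
  rw [e1]
  exact (Real.Gamma_strictMonoOn_Ici.monotoneOn (by simp [mem_Ici]; linarith)
    (by simp [mem_Ici]; linarith) (by linarith))

-- master summability
lemma master_summable {α : ℝ} (h1 : 1 < α) (m : ℕ) {A : ℝ} (hA : 0 ≤ A) :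
    Summable (fun k : ℕ => (k + 1 : ℝ) ^ m * A ^ k / Real.Gamma (α * k + 1)) := by
  apply summable_of_ratio_norm_eventually_le (r := 1/2) (by norm_num)
  have htend : Tendsto (fun k : ℕ => (2:ℝ)^m * A / (α * k + 1)) atTop (nhds 0) := by
    apply Tendsto.div_atTop tendsto_const_nhds
    apply Tendsto.atTop_add _ tendsto_const_nhds
    exact Tendsto.const_mul_atTop (by linarith) tendsto_natCast_atTop_atTop
  filter_upwards [htend.eventually_le_const (by norm_num : (0:ℝ) < 1/2)] with k hk
  have hΓpos : ∀ y : ℝ, 0 < y → 0 < Real.Gamma y := fun y hy => Real.Gamma_pos_of_pos hy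
  have hk0 : (0:ℝ) ≤ (k:ℝ) := Nat.cast_nonneg k
  have hx1 : (1:ℝ) ≤ α * k + 1 := by nlinarith
  have hΓ1 : (0:ℝ) < Real.Gamma (α * k + 1) := hΓpos _ (by linarith)
  have hΓ2 : (0:ℝ) < Real.Gamma (α * (k+1:ℕ) + 1) := hΓpos _ (by push_cast; nlinarith)
  have hgrow : (α * k + 1) * Real.Gamma (α * k + 1) ≤ Real.Gamma (α * (k+1:ℕ) + 1) := by
    have := gamma_growth h1 hx1
    have harg : α * k + 1 + α = α * ((k:ℕ)+1:ℕ) + 1 := by push_cast; ring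
    rwa [harg] at this
  rw [Real.norm_eq_abs, Real.norm_eq_abs, abs_div, abs_div]
  rw [abs_of_pos hΓ2, abs_of_pos hΓ1]
  have hnum2 : |((k:ℝ)+1+1) ^ m * A ^ (k+1)| = ((k:ℝ)+1+1) ^ m * A ^ (k+1) := by
    apply abs_of_nonneg; positivity
  have hnum1 : |((k:ℝ)+1) ^ m * A ^ k| = ((k:ℝ)+1) ^ m * A ^ k := by
    apply abs_of_nonneg; positivity
  push_cast
  rw [hnum2, hnum1]
  -- goal : (k+2)^m * A^(k+1) / Γ(α(k+1)+1) ≤ 1/2 * ((k+1)^m * A^k / Γ(αk+1))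
  have step1 : ((k:ℝ)+1+1) ^ m * A ^ (k+1) / Real.Gamma (α * ((k:ℝ)+1) + 1)
      ≤ ((k:ℝ)+1+1) ^ m * A ^ (k+1) / ((α * k + 1) * Real.Gamma (α * k + 1)) := by
    apply div_le_div_of_nonneg_left (by positivity) (by positivity)
    have := hgrow; push_cast at this; linarith
  refine step1.trans ?_
  have hb : ((k:ℝ)+1+1) ^ m ≤ 2 ^ m * ((k:ℝ)+1) ^ m := by
    rw [← mul_pow]
    apply pow_le_pow_left₀ (by positivity)
    linarith
  have key : ((k:ℝ)+1+1) ^ m * A ^ (k+1) ≤ (1/2 * (α * k + 1)) * (((k:ℝ)+1) ^ m * A ^ k) := by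
    have hAk : (0:ℝ) ≤ A ^ k := by positivity
    calc ((k:ℝ)+1+1) ^ m * A ^ (k+1) = (((k:ℝ)+1+1) ^ m * A) * A ^ k := by ring
      _ ≤ ((2 ^ m * ((k:ℝ)+1) ^ m) * A) * A ^ k := by
          apply mul_le_mul_of_nonneg_right (mul_le_mul_of_nonneg_right hb hA) hAk
      _ ≤ (1/2 * (α * k + 1)) * (((k:ℝ)+1) ^ m * A ^ k) := by
          have h2 : (2:ℝ)^m * A ≤ 1/2 * (α * k + 1) := by
            rw [div_le_iff₀ (by nlinarith : (0:ℝ) < α * k + 1)] at hk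
            linarith [hk]
          calc (2 ^ m * ((k:ℝ)+1) ^ m) * A * A ^ k
              = (2 ^ m * A) * (((k:ℝ)+1) ^ m * A ^ k) := by ring
            _ ≤ (1/2 * (α * k + 1)) * (((k:ℝ)+1) ^ m * A ^ k) :=
                mul_le_mul_of_nonneg_right h2 (by positivity)
  have hre : (1:ℝ)/2 * (((k:ℝ)+1) ^ m * A ^ k / Real.Gamma (α * k + 1))
      = (1/2 * (((k:ℝ)+1) ^ m * A ^ k)) / Real.Gamma (α * k + 1) := by ring
  rw [hre, div_le_div_iff₀ (by positivity) hΓ1]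
  nlinarith [mul_le_mul_of_nonneg_right key hΓ1.le]
-- helper: term-by-term differentiation on an open set
lemma hasDerivAt_tsum_on {f f' : ℕ → ℝ → ℝ} {s : Set ℝ} (hs : IsOpen s) {u : ℕ → ℝ}
    (hu : Summable u)
    (hf : ∀ k x, x ∈ s → HasDerivAt (f k) (f' k x) x)
    (hb : ∀ k x, x ∈ s → ‖f' k x‖ ≤ u k)
    (hsum : ∀ x ∈ s, Summable (fun k => f k x))
    {x : ℝ} (hx : x ∈ s) :
    HasDerivAt (fun y => ∑' k, f k y) (∑' k, f' k x) x := by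
  apply hasDerivAt_of_tendstoUniformlyOn (l := (atTop : Filter (Finset ℕ)))
    (f := fun t y => ∑ k ∈ t, f k y) (f' := fun t y => ∑ k ∈ t, f' k y) hs
    (tendstoUniformlyOn_tsum hu hb)
    (Eventually.of_forall fun t y hy => HasDerivAt.fun_sum fun k _ => hf k y hy)
    (fun y hy => (hsum y hy).hasSum) hx
lemma summable_coef_norm {α lam : ℝ} (h1 : 1 < α) (hlam : 0 < lam) {β : ℝ} {m : ℕ} {d : ℕ → ℝ}
    {C : ℝ} (hd : ∀ k : ℕ, |d k| ≤ C * (k+1:ℝ)^m * lam^k / Real.Gamma (α*k+1))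
    {x : ℝ} (hx : 0 < x) : Summable (fun k : ℕ => ‖d k * x^(α*k+β)‖) := by
  have hxα : (0:ℝ) < x ^ α := Real.rpow_pos_of_pos hx α
  refine Summable.of_nonneg_of_le (fun k => norm_nonneg _) (fun k => ?_)
    ((master_summable h1 m (by positivity : (0:ℝ) ≤ lam * x^α)).mul_left (C * x^β))

  have hpow : x ^ (α*(k:ℝ)+β) = (x^α)^k * x^β := by
    rw [Real.rpow_add hx, Real.rpow_mul hx.le, Real.rpow_natCast]
  rw [Real.norm_eq_abs, abs_mul, abs_of_pos (Real.rpow_pos_of_pos hx _), hpow]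
  calc |d k| * ((x^α)^k * x^β)
      ≤ (C * (k+1:ℝ)^m * lam^k / Real.Gamma (α*k+1)) * ((x^α)^k * x^β) :=
        mul_le_mul_of_nonneg_right (hd k) (by positivity)
    _ = (C * x^β) * ((k+1:ℝ)^m * (lam * x^α)^k / Real.Gamma (α*k+1)) := by
        rw [mul_pow]; ring

lemma summable_coef {α lam : ℝ} (h1 : 1 < α) (hlam : 0 < lam) {β : ℝ} {m : ℕ} {d : ℕ → ℝ}
    {C : ℝ} (hd : ∀ k : ℕ, |d k| ≤ C * (k+1:ℝ)^m * lam^k / Real.Gamma (α*k+1))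
    {x : ℝ} (hx : 0 < x) : Summable (fun k : ℕ => d k * x^(α*k+β)) :=
  (summable_coef_norm h1 hlam hd hx).of_norm

lemma tsum_rpow_hasDerivAt {α lam : ℝ} (h1 : 1 < α) (h2 : α < 2) (hlam : 0 < lam)
    (β : ℝ) (m : ℕ) (d : ℕ → ℝ) {C : ℝ} (hC : 0 ≤ C)
    (hd : ∀ k : ℕ, |d k| ≤ C * (k+1:ℝ)^m * lam^k / Real.Gamma (α*k+1))
    {r : ℝ} (hr : 0 < r) :
    HasDerivAt (fun x : ℝ => ∑' k, d k * x^(α*k+β))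
      (∑' k, (d k * (α*(k:ℝ)+β)) * r^(α*k+(β-1))) r := by
  set M := r + 1 with hM
  have hM0 : (0:ℝ) < M := by simp [hM]; linarith
  set K := (r/2)^(β-1) + M^(β-1) with hK
  have hK0 : (0:ℝ) ≤ K := by positivity
  apply hasDerivAt_tsum_on (f := fun (k : ℕ) (x : ℝ) => d k * x^(α*k+β))
    (f' := fun (k : ℕ) (x : ℝ) => (d k * (α*(k:ℝ)+β)) * x^(α*k+(β-1)))
    (s := Set.Ioo (r/2) (r+1)) isOpen_Ioo
    (u := fun k : ℕ => (C * ((2+|β|) * K)) *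
      ((k+1:ℝ)^(m+1) * (lam * M^α)^k / Real.Gamma (α*k+1)))
    ((master_summable h1 (m+1) (by positivity : (0:ℝ) ≤ lam * M^α)).mul_left _)
  · -- derivatives of terms
    intro k x hx
    have hx0 : 0 < x := lt_trans (by linarith) hx.1
    have h := (Real.hasDerivAt_rpow_const (x := x) (p := α*k+β) (Or.inl hx0.ne')).const_mul (d k)
    have he : α*(k:ℝ)+β-1 = α*(k:ℝ)+(β-1) := by ring
    rw [he, ← mul_assoc] at h
    exact h
  · -- bounds
    intro k x hx
    have hx0 : 0 < x := lt_trans (by linarith) hx.1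
    have hΓ : (0:ℝ) < Real.Gamma (α*k+1) :=
      Real.Gamma_pos_of_pos (by positivity)
    have hC0 : (0:ℝ) ≤ C * (k+1:ℝ)^m * lam^k / Real.Gamma (α*k+1) :=
      le_trans (abs_nonneg _) (hd k)
    have hpow : x ^ (α*(k:ℝ)+(β-1)) = x^(α*(k:ℝ)) * x^(β-1) := Real.rpow_add hx0 _ _
    have bound1 : x^(α*(k:ℝ)) ≤ (M^α)^k := by
      rw [← Real.rpow_natCast (M^α) k, ← Real.rpow_mul hM0.le]
      exact Real.rpow_le_rpow hx0.le (le_of_lt hx.2) (by positivity)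
    have bound2 : x^(β-1) ≤ K := by
      rcases le_or_gt 0 (β-1) with hβ | hβ
      · have : x^(β-1) ≤ M^(β-1) := Real.rpow_le_rpow hx0.le (le_of_lt hx.2) hβ
        have h0 : (0:ℝ) ≤ (r/2)^(β-1) := by positivity
        simp only [hK]; linarith
      · have : x^(β-1) ≤ (r/2)^(β-1) :=
          Real.rpow_le_rpow_of_nonpos (by linarith) (le_of_lt hx.1) hβ.le
        have h0 : (0:ℝ) ≤ M^(β-1) := by positivity
        simp only [hK]; linarith
    have bound3 : |α*(k:ℝ)+β| ≤ (2+|β|) * (k+1) := by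
      have h1' : |α*(k:ℝ)+β| ≤ |α*(k:ℝ)| + |β| := abs_add_le _ _
      have h2' : |α*(k:ℝ)| = α*(k:ℝ) := abs_of_nonneg (by positivity)
      have h3' : |β| ≤ |β| * (k+1) := le_mul_of_one_le_right (abs_nonneg _) (by
        have := Nat.cast_nonneg (α := ℝ) k; linarith)
      have hk0 : (0:ℝ) ≤ (k:ℝ) := Nat.cast_nonneg k
      nlinarith
    rw [Real.norm_eq_abs, abs_mul, abs_mul,
      abs_of_pos (Real.rpow_pos_of_pos hx0 _), hpow]
    have t1 : |d k| * |α*(k:ℝ)+β| ≤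
        (C * (k+1:ℝ)^m * lam^k / Real.Gamma (α*k+1)) * ((2+|β|) * (k+1)) :=
      mul_le_mul (hd k) bound3 (abs_nonneg _) hC0
    have t2 : x^(α*(k:ℝ)) * x^(β-1) ≤ (M^α)^k * K :=
      mul_le_mul bound1 bound2 (by positivity) (by positivity)
    calc |d k| * |α*(k:ℝ)+β| * (x^(α*(k:ℝ)) * x^(β-1))
        ≤ ((C * (k+1:ℝ)^m * lam^k / Real.Gamma (α*k+1)) * ((2+|β|) * (k+1))) *
            ((M^α)^k * K) :=
          mul_le_mul t1 t2 (by positivity) (by positivity)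
      _ = (C * ((2+|β|) * K)) * ((k+1:ℝ)^(m+1) * (lam * M^α)^k / Real.Gamma (α*k+1)) := by
          rw [pow_succ, mul_pow]; ring
  · -- summability at points
    intro x hx
    exact summable_coef h1 hlam hd (lt_trans (by linarith) hx.1)
  · exact Set.mem_Ioo.mpr ⟨by linarith, by linarith⟩
lemma beta_t {a b t : ℝ} (ha : -1 < a) (hb : -1 < b) (ht : 0 < t) :
    IntegrableOn (fun r : ℝ => r ^ a * (t - r) ^ b) (Set.Ioo 0 t) ∧
    ∫ r in Set.Ioo 0 t, r ^ a * (t - r) ^ b =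
      Real.Gamma (a+1) * Real.Gamma (b+1) / Real.Gamma (a+b+2) * t ^ (a+b+1) := by
  have hp : (0:ℝ) < a + 1 := by linarith
  have hq : (0:ℝ) < b + 1 := by linarith
  set pc : ℂ := ((a+1 : ℝ) : ℂ) with hpc
  set qc : ℂ := ((b+1 : ℝ) : ℂ) with hqc
  have hp' : 0 < pc.re := by simp [hpc, hp]
  have hq' : 0 < qc.re := by simp [hqc, hq]
  set f01 : ℝ → ℝ := fun x => x ^ a * (1 - x) ^ b with hf01def
  have heq01 : ∀ x : ℝ, x ∈ Set.Ioc (0:ℝ) 1 →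
      (x:ℂ) ^ (pc - 1) * (1 - (x:ℂ)) ^ (qc - 1) = ((f01 x : ℝ) : ℂ) := by
    intro x hx
    have hx0 : (0:ℝ) ≤ x := hx.1.le
    have hx1 : (0:ℝ) ≤ 1 - x := by linarith [hx.2]
    have e1 : pc - 1 = ((a:ℝ):ℂ) := by simp [hpc]
    have e2 : qc - 1 = ((b:ℝ):ℂ) := by simp [hqc]
    rw [e1, e2, ← Complex.ofReal_cpow hx0, ← Complex.ofReal_one, ← Complex.ofReal_sub,
      ← Complex.ofReal_cpow hx1, ← Complex.ofReal_mul]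
  have hconv := Complex.betaIntegral_convergent hp' hq'
  rw [intervalIntegrable_iff_integrableOn_Ioc_of_le zero_le_one] at hconv
  have hIoc : IntegrableOn (fun x : ℝ => ((f01 x : ℝ) : ℂ)) (Set.Ioc 0 1) volume :=
    hconv.congr_fun heq01 measurableSet_Ioc
  have hf01 : IntegrableOn f01 (Set.Ioc 0 1) volume := by
    have := hIoc.re
    simp at this; exact this
  -- value of the beta integral
  have hbeta : Complex.betaIntegral pc qc = ((∫ x in Set.Ioc (0:ℝ) 1, f01 x : ℝ) : ℂ) := by
    rw [Complex.betaIntegral, intervalIntegral.integral_of_le zero_le_one,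
      setIntegral_congr_fun measurableSet_Ioc heq01]
    exact integral_ofReal (𝕜 := ℂ)
  have hGmm := Complex.Gamma_mul_Gamma_eq_betaIntegral hp' hq'
  have hsum : pc + qc = ((a+b+2 : ℝ) : ℂ) := by simp [hpc, hqc]; push_cast; ring
  rw [hsum, hbeta, hpc, hqc, Complex.Gamma_ofReal, Complex.Gamma_ofReal,
    Complex.Gamma_ofReal, ← Complex.ofReal_mul, ← Complex.ofReal_mul] at hGmm
  have hgr : Real.Gamma (a+1) * Real.Gamma (b+1) =
      Real.Gamma (a+b+2) * ∫ x in Set.Ioc (0:ℝ) 1, f01 x := by exact_mod_cast hGmm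
  have hΓab : (0:ℝ) < Real.Gamma (a+b+2) := Real.Gamma_pos_of_pos (by linarith)
  have B01 : ∫ x in Set.Ioc (0:ℝ) 1, f01 x =
      Real.Gamma (a+1) * Real.Gamma (b+1) / Real.Gamma (a+b+2) := by
    rw [eq_div_iff hΓab.ne']
    linarith [hgr]
  -- integrability on (0, t)
  have h01' : IntervalIntegrable f01 volume 0 1 :=
    (intervalIntegrable_iff_integrableOn_Ioc_of_le zero_le_one).mpr hf01
  have hcomp := h01'.comp_mul_left (c := t⁻¹)
  rw [zero_div, one_div, inv_inv] at hcomp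
  have hcomp' := hcomp.const_mul (t ^ a * t ^ b)
  rw [intervalIntegrable_iff_integrableOn_Ioc_of_le ht.le] at hcomp'
  have hteq : ∀ x : ℝ, x ∈ Set.Ioc (0:ℝ) t →
      (t ^ a * t ^ b) * f01 (t⁻¹ * x) = x ^ a * (t - x) ^ b := by
    intro x hx
    have hx0 : (0:ℝ) ≤ x := hx.1.le
    have htx : (0:ℝ) ≤ t - x := by linarith [hx.2]
    have e1 : t⁻¹ * x = x / t := by ring
    have e2 : (1 : ℝ) - x / t = (t - x) / t := by field_simp
    simp only [hf01def, e1, e2]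
    rw [Real.div_rpow hx0 ht.le, Real.div_rpow htx ht.le]
    have h1 : t ^ a ≠ 0 := (Real.rpow_pos_of_pos ht a).ne'
    have h2 : t ^ b ≠ 0 := (Real.rpow_pos_of_pos ht b).ne'
    field_simp
  have hint : IntegrableOn (fun r : ℝ => r ^ a * (t - r) ^ b) (Set.Ioo 0 t) volume :=
    (hcomp'.congr_fun hteq measurableSet_Ioc).mono_set Set.Ioo_subset_Ioc_self
  refine ⟨hint, ?_⟩
  -- value on (0, t)
  have hval01 : ∀ x : ℝ, x ∈ Set.uIcc (0:ℝ) 1 →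
      (fun x : ℝ => (t*x) ^ a * (t - t*x) ^ b) x = (t ^ a * t ^ b) * f01 x := by
    intro x hx
    rw [Set.uIcc_of_le zero_le_one] at hx
    have hx0 : (0:ℝ) ≤ x := hx.1
    have hx1 : (0:ℝ) ≤ 1 - x := by linarith [hx.2]
    simp only [hf01def]
    rw [Real.mul_rpow ht.le hx0, show t - t*x = t * (1-x) by ring,
      Real.mul_rpow ht.le hx1]
    ring
  have hsmul := intervalIntegral.smul_integral_comp_mul_left
    (a := 0) (b := 1) (fun r : ℝ => r ^ a * (t - r) ^ b) t
  rw [mul_zero, mul_one] at hsmul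
  have hcongr : ∫ x in (0:ℝ)..1, (t*x) ^ a * (t - t*x) ^ b
      = (t ^ a * t ^ b) * ∫ x in (0:ℝ)..1, f01 x := by
    rw [intervalIntegral.integral_congr hval01, intervalIntegral.integral_const_mul]
  have hI1 : ∫ x in (0:ℝ)..1, f01 x =
      Real.Gamma (a+1) * Real.Gamma (b+1) / Real.Gamma (a+b+2) := by
    rw [intervalIntegral.integral_of_le zero_le_one, B01]
  have final : ∫ r in Set.Ioc (0:ℝ) t, r ^ a * (t - r) ^ b =
      t * (t ^ a * t ^ b * (Real.Gamma (a+1) * Real.Gamma (b+1) / Real.Gamma (a+b+2))) := by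
    rw [← intervalIntegral.integral_of_le ht.le, ← hsmul]
    rw [hcongr, hI1]
    simp [smul_eq_mul]
  rw [← integral_Ioc_eq_integral_Ioo, final]
  rw [show a+b+1 = a+(b+1) by ring, Real.rpow_add ht, Real.rpow_add ht, Real.rpow_one]
  ring
/-- Let `1 < α < 2` and `λ > 0`, and set `e(r) = E_{α,1}(−λ r^α)`. Then `e` is twice
differentiable on `(0,∞)`, for every `t > 0` the function `r ↦ (t−r)^{1−α} e''(r)` is
integrable on `(0,t)`, and `(1/Γ(2−α)) ∫_0^t (t−r)^{1−α} e''(r) dr = −λ E_{α,1}(−λ t^α)`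
for all `t > 0`. -/
theorem caputo_wave_mittagLeffler (α lam : ℝ) (h1 : 1 < α) (h2 : α < 2) (hlam : 0 < lam) :
    (∀ r : ℝ, 0 < r →
        DifferentiableAt ℝ (fun s : ℝ => mittagLefflerReal α 1 (-(lam * s ^ α))) r ∧
        DifferentiableAt ℝ
          (deriv (fun s : ℝ => mittagLefflerReal α 1 (-(lam * s ^ α)))) r) ∧
    ∀ t : ℝ, 0 < t →
      IntegrableOn
        (fun r : ℝ => (t - r) ^ (1 - α) *
          deriv (deriv (fun s : ℝ => mittagLefflerReal α 1 (-(lam * s ^ α)))) r)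
        (Set.Ioo 0 t) ∧
      (1 / Real.Gamma (2 - α)) *
          (∫ r in Set.Ioo 0 t, (t - r) ^ (1 - α) *
            deriv (deriv (fun s : ℝ => mittagLefflerReal α 1 (-(lam * s ^ α)))) r)
        = -(lam * mittagLefflerReal α 1 (-(lam * t ^ α))) := by
  have hΓpos : ∀ y : ℝ, 0 < y → 0 < Real.Gamma y := fun y hy => Real.Gamma_pos_of_pos hy
  set e : ℝ → ℝ := fun s : ℝ => mittagLefflerReal α 1 (-(lam * s ^ α)) with hedef
  set d0 : ℕ → ℝ := fun k => (-lam)^k / Real.Gamma (α*k+1) with hd0def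
  set d1 : ℕ → ℝ := fun k => d0 k * (α*(k:ℝ)+0) with hd1def
  set d2 : ℕ → ℝ := fun k => d1 k * (α*(k:ℝ)+(0-1)) with hd2def
  set E0 : ℝ → ℝ := fun x => ∑' k, d0 k * x^(α*(k:ℝ)+0) with hE0def
  set E1 : ℝ → ℝ := fun x => ∑' k, d1 k * x^(α*(k:ℝ)+(0-1)) with hE1def
  set E2 : ℝ → ℝ := fun x => ∑' k, d2 k * x^(α*(k:ℝ)+(0-1-1)) with hE2def
  have hd0 : ∀ k : ℕ, |d0 k| ≤ 1 * (k+1:ℝ)^0 * lam^k / Real.Gamma (α*k+1) := by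
    intro k
    have hΓ := hΓpos (α*k+1) (by positivity)
    rw [hd0def]
    simp only [pow_zero, mul_one, one_mul]
    rw [abs_div, abs_pow, abs_neg, abs_of_pos hlam, abs_of_pos hΓ]
  have hd1 : ∀ k : ℕ, |d1 k| ≤ 2 * (k+1:ℝ)^1 * lam^k / Real.Gamma (α*k+1) := by
    intro k
    have hΓ := hΓpos (α*k+1) (by positivity)
    have hk0 : (0:ℝ) ≤ (k:ℝ) := Nat.cast_nonneg k
    have hb : |α*(k:ℝ)+0| ≤ 2*((k:ℝ)+1) := by
      rw [add_zero, abs_of_nonneg (by positivity)]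
      nlinarith
    calc |d1 k| = |d0 k| * |α*(k:ℝ)+0| := abs_mul _ _
      _ ≤ (1 * (k+1:ℝ)^0 * lam^k / Real.Gamma (α*k+1)) * (2*((k:ℝ)+1)) :=
          mul_le_mul (hd0 k) hb (abs_nonneg _) (le_trans (abs_nonneg _) (hd0 k))
      _ = 2 * (k+1:ℝ)^1 * lam^k / Real.Gamma (α*k+1) := by
          rw [pow_zero, pow_one]; ring
  have hd2 : ∀ k : ℕ, |d2 k| ≤ 6 * (k+1:ℝ)^2 * lam^k / Real.Gamma (α*k+1) := by
    intro k
    have hΓ := hΓpos (α*k+1) (by positivity)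
    have hk0 : (0:ℝ) ≤ (k:ℝ) := Nat.cast_nonneg k
    have hb : |α*(k:ℝ)+(0-1)| ≤ 3*((k:ℝ)+1) := by
      rw [abs_le]
      constructor <;> nlinarith
    calc |d2 k| = |d1 k| * |α*(k:ℝ)+(0-1)| := abs_mul _ _
      _ ≤ (2 * (k+1:ℝ)^1 * lam^k / Real.Gamma (α*k+1)) * (3*((k:ℝ)+1)) :=
          mul_le_mul (hd1 k) hb (abs_nonneg _) (le_trans (abs_nonneg _) (hd1 k))
      _ = 6 * (k+1:ℝ)^2 * lam^k / Real.Gamma (α*k+1) := by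
          rw [pow_one, sq]; ring
  have hE0' : ∀ r : ℝ, 0 < r → HasDerivAt E0 (E1 r) r := fun r hr =>
    tsum_rpow_hasDerivAt h1 h2 hlam 0 0 d0 (by norm_num) hd0 hr
  have hE1' : ∀ r : ℝ, 0 < r → HasDerivAt E1 (E2 r) r := fun r hr =>
    tsum_rpow_hasDerivAt h1 h2 hlam (0-1) 1 d1 (by norm_num) hd1 hr
  have heqE : ∀ x : ℝ, 0 < x → e x = E0 x := by
    intro x hx
    rw [hedef, hE0def]
    show mittagLefflerReal α 1 (-(lam * x ^ α)) = _
    rw [mittagLefflerReal]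
    apply tsum_congr
    intro k
    have hxk : x^(α*(k:ℝ)+0) = (x^α)^k := by
      rw [add_zero, Real.rpow_mul hx.le, Real.rpow_natCast]
    rw [hxk, hd0def]
    ring
  have heA : ∀ r : ℝ, 0 < r → HasDerivAt e (E1 r) r := by
    intro r hr
    apply (hE0' r hr).congr_of_eventuallyEq
    filter_upwards [isOpen_Ioi.mem_nhds (Set.mem_Ioi.mpr hr)] with x hx
    exact heqE x hx
  have hderiv1 : ∀ r : ℝ, 0 < r → deriv e r = E1 r := fun r hr => (heA r hr).deriv
  have heB : ∀ r : ℝ, 0 < r → HasDerivAt (deriv e) (E2 r) r := by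
    intro r hr
    apply (hE1' r hr).congr_of_eventuallyEq
    filter_upwards [isOpen_Ioi.mem_nhds (Set.mem_Ioi.mpr hr)] with x hx
    exact hderiv1 x hx
  have hderiv2 : ∀ r : ℝ, 0 < r → deriv (deriv e) r = E2 r := fun r hr => (heB r hr).deriv
  constructor
  · exact fun r hr => ⟨(heA r hr).differentiableAt, (heB r hr).differentiableAt⟩
  intro t ht
  have hΓ2α : (0:ℝ) < Real.Gamma (2-α) := hΓpos _ (by linarith)
  set G : ℕ → ℝ → ℝ := fun k r => (t - r)^(1-α) * (d2 k * r^(α*(k:ℝ)+(0-1-1))) with hGdef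
  have hd20 : d2 0 = 0 := by
    rw [hd2def, hd1def]
    simp
  have hbB : (-1:ℝ) < 1 - α := by linarith
  have hk1 : ∀ k : ℕ, 1 ≤ k → (-1 : ℝ) < α*(k:ℝ)+(0-1-1) := by
    intro k hk
    have : (1:ℝ) ≤ (k:ℝ) := by exact_mod_cast hk
    nlinarith
  -- Gamma factorization for k ≥ 1
  have hΓfact : ∀ k : ℕ, 1 ≤ k →
      Real.Gamma (α*(k:ℝ)+1) = (α*(k:ℝ))*((α*(k:ℝ)-1) * Real.Gamma (α*(k:ℝ)-1)) := by
    intro k hk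
    have hk1' : (1:ℝ) ≤ (k:ℝ) := by exact_mod_cast hk
    have hy : (0:ℝ) < α*(k:ℝ) := by nlinarith
    have hy1 : (0:ℝ) < α*(k:ℝ)-1 := by nlinarith
    have e1 : Real.Gamma (α*(k:ℝ)+1) = (α*(k:ℝ)) * Real.Gamma (α*(k:ℝ)) :=
      Real.Gamma_add_one hy.ne'
    have e2 : Real.Gamma (α*(k:ℝ)) = (α*(k:ℝ)-1) * Real.Gamma (α*(k:ℝ)-1) := by
      have := Real.Gamma_add_one (s := α*(k:ℝ)-1) hy1.ne'
      rw [sub_add_cancel] at this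
      exact this
    rw [e1, e2]
  have hyk : ∀ k : ℕ, 1 ≤ k → d2 k * Real.Gamma (α*(k:ℝ)-1) = (-lam)^k := by
    intro k hk
    have hk1' : (1:ℝ) ≤ (k:ℝ) := by exact_mod_cast hk
    have hy : (0:ℝ) < α*(k:ℝ) := by nlinarith
    have hy1 : (0:ℝ) < α*(k:ℝ)-1 := by nlinarith
    have hΓm := hΓpos _ hy1
    simp only [hd2def, hd1def, hd0def]
    rw [hΓfact k hk]
    field_simp
    ring
  have hykabs : ∀ k : ℕ, 1 ≤ k → |d2 k| * Real.Gamma (α*(k:ℝ)-1) = lam^k := by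
    intro k hk
    have hk1' : (1:ℝ) ≤ (k:ℝ) := by exact_mod_cast hk
    have hy : (0:ℝ) < α*(k:ℝ) := by nlinarith
    have hy1 : (0:ℝ) < α*(k:ℝ)-1 := by nlinarith
    have hΓm := hΓpos _ hy1
    have hΓ := hΓpos (α*k+1) (by positivity)
    have habs : |d2 k| = lam^k / Real.Gamma (α*(k:ℝ)+1) * ((α*(k:ℝ))*(α*(k:ℝ)-1)) := by
      simp only [hd2def, hd1def, hd0def]
      rw [abs_mul, abs_mul, abs_div, abs_pow, abs_neg, abs_of_pos hlam, abs_of_pos hΓ,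
        abs_of_pos (by linarith : (0:ℝ) < α*(k:ℝ)+0),
        abs_of_pos (by linarith : (0:ℝ) < α*(k:ℝ)+(0-1))]
      ring
    rw [habs, hΓfact k hk]
    field_simp
  -- integrability of each term
  have hGint : ∀ k : ℕ, IntegrableOn (G k) (Set.Ioo 0 t) volume := by
    intro k
    rcases Nat.eq_zero_or_pos k with hk | hk
    · rw [hGdef, hk]
      simp only [hd20, zero_mul, mul_zero]
      exact integrableOn_zero
    · have hbeta := (beta_t (hk1 k hk) hbB ht).1
      exact IntegrableOn.congr_fun (hbeta.const_mul (d2 k))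
        (fun r hr => by simp only [hGdef]; ring) measurableSet_Ioo
  -- values of the integrals
  have hGval : ∀ j : ℕ, ∫ r in Set.Ioo 0 t, G (j+1) r
      = (Real.Gamma (2-α) * -lam) *
        ((-lam)^j * t^(α*(j:ℝ)) / Real.Gamma (α*(j:ℝ)+1)) := by
    intro j
    have hkk : 1 ≤ j+1 := Nat.succ_le_succ (Nat.zero_le j)
    have hbeta := beta_t (hk1 (j+1) hkk) hbB ht
    have step1 : ∫ r in Set.Ioo 0 t, G (j+1) r
        = d2 (j+1) * ∫ r in Set.Ioo 0 t, r^(α*((j+1:ℕ):ℝ)+(0-1-1)) * (t-r)^(1-α) := by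
      rw [← integral_const_mul]
      apply setIntegral_congr_fun measurableSet_Ioo
      intro r hr
      simp only [hGdef]
      ring
    rw [step1, hbeta.2]
    have e1 : α*((j+1:ℕ):ℝ)+(0-1-1)+1 = α*((j+1:ℕ):ℝ)-1 := by ring
    have e2 : (1-α)+1 = 2-α := by ring
    have e3 : α*((j+1:ℕ):ℝ)+(0-1-1)+(1-α)+2 = α*(j:ℝ)+1 := by push_cast; ring
    have e4 : α*((j+1:ℕ):ℝ)+(0-1-1)+(1-α)+1 = α*(j:ℝ) := by push_cast; ring
    rw [e1, e2, e3, e4]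
    have hid := hyk (j+1) hkk
    have hsucc : ((-lam):ℝ)^(j+1) = (-lam)^j * (-lam) := pow_succ _ _
    calc d2 (j+1) * (Real.Gamma (α*((j+1:ℕ):ℝ)-1) * Real.Gamma (2-α) /
            Real.Gamma (α*(j:ℝ)+1) * t^(α*(j:ℝ)))
        = (d2 (j+1) * Real.Gamma (α*((j+1:ℕ):ℝ)-1)) * Real.Gamma (2-α) * t^(α*(j:ℝ)) /
            Real.Gamma (α*(j:ℝ)+1) := by ring
      _ = (Real.Gamma (2-α) * -lam) *
          ((-lam)^j * t^(α*(j:ℝ)) / Real.Gamma (α*(j:ℝ)+1)) := by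
          rw [hid, hsucc]; ring
  -- values of the norm integrals
  have hGnorm : ∀ j : ℕ, ∫ r in Set.Ioo 0 t, ‖G (j+1) r‖
      = (lam * Real.Gamma (2-α)) *
        (lam^j * t^(α*(j:ℝ)) / Real.Gamma (α*(j:ℝ)+1)) := by
    intro j
    have hkk : 1 ≤ j+1 := Nat.succ_le_succ (Nat.zero_le j)
    have hbeta := beta_t (hk1 (j+1) hkk) hbB ht
    have step1 : ∫ r in Set.Ioo 0 t, ‖G (j+1) r‖
        = |d2 (j+1)| * ∫ r in Set.Ioo 0 t, r^(α*((j+1:ℕ):ℝ)+(0-1-1)) * (t-r)^(1-α) := by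
      rw [← integral_const_mul]
      apply setIntegral_congr_fun measurableSet_Ioo
      intro r hr
      simp only [hGdef]
      have h1' : (0:ℝ) < (t-r)^(1-α) := Real.rpow_pos_of_pos (by linarith [hr.2]) _
      have h2' : (0:ℝ) < r^(α*((j+1:ℕ):ℝ)+(0-1-1)) := Real.rpow_pos_of_pos hr.1 _
      rw [Real.norm_eq_abs, abs_mul, abs_mul, abs_of_pos h1', abs_of_pos h2']
      ring
    rw [step1, hbeta.2]
    have e1 : α*((j+1:ℕ):ℝ)+(0-1-1)+1 = α*((j+1:ℕ):ℝ)-1 := by ring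
    have e2 : (1-α)+1 = 2-α := by ring
    have e3 : α*((j+1:ℕ):ℝ)+(0-1-1)+(1-α)+2 = α*(j:ℝ)+1 := by push_cast; ring
    have e4 : α*((j+1:ℕ):ℝ)+(0-1-1)+(1-α)+1 = α*(j:ℝ) := by push_cast; ring
    rw [e1, e2, e3, e4]
    have hid := hykabs (j+1) hkk
    have hsucc : (lam:ℝ)^(j+1) = lam^j * lam := pow_succ _ _
    calc |d2 (j+1)| * (Real.Gamma (α*((j+1:ℕ):ℝ)-1) * Real.Gamma (2-α) /
            Real.Gamma (α*(j:ℝ)+1) * t^(α*(j:ℝ)))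
        = (|d2 (j+1)| * Real.Gamma (α*((j+1:ℕ):ℝ)-1)) * Real.Gamma (2-α) * t^(α*(j:ℝ)) /
            Real.Gamma (α*(j:ℝ)+1) := by ring
      _ = (lam * Real.Gamma (2-α)) *
          (lam^j * t^(α*(j:ℝ)) / Real.Gamma (α*(j:ℝ)+1)) := by
          rw [hid, hsucc]; ring
  -- summability of the norm integrals
  have hsumnorm : Summable (fun k : ℕ => ∫ r in Set.Ioo 0 t, ‖G k r‖) := by
    rw [← summable_nat_add_iff 1]
    apply Summable.congr _ (fun j => (hGnorm j).symm)
    have hmaster := (master_summable h1 0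
      (by positivity : (0:ℝ) ≤ lam * t^α)).mul_left (lam * Real.Gamma (2-α))
    apply hmaster.congr
    intro j
    have htj : t^(α*(j:ℝ)) = (t^α)^j := by
      rw [Real.rpow_mul ht.le, Real.rpow_natCast]
    rw [pow_zero, one_mul, mul_pow, htj]
  -- pointwise identity on (0,t)
  have hptwise : ∀ r ∈ Set.Ioo (0:ℝ) t,
      (t - r)^(1-α) * deriv (deriv e) r = ∑' k, G k r := by
    intro r hr
    rw [hderiv2 r hr.1, hE2def]
    simp only [hGdef]
    exact (tsum_mul_left).symm
  -- pointwise summability of norms on (0,t)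
  have hsummG : ∀ r ∈ Set.Ioo (0:ℝ) t, Summable (fun k => ‖G k r‖) := by
    intro r hr
    have h3 := summable_coef_norm (β := 0-1-1) h1 hlam hd2 hr.1
    apply Summable.congr (h3.mul_left ‖(t-r)^(1-α)‖)
    intro k
    simp only [hGdef]
    rw [← norm_mul]
  -- measurability
  have hmeas : AEStronglyMeasurable (fun r : ℝ => (t - r)^(1-α) * deriv (deriv e) r)
      (volume.restrict (Set.Ioo 0 t)) := by
    apply AEStronglyMeasurable.mul
    · apply ContinuousOn.aestronglyMeasurable _ measurableSet_Ioo
      apply ContinuousOn.rpow_const (continuous_const.sub continuous_id).continuousOn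
      intro x hx
      simp only [Set.mem_Ioo] at hx
      exact Or.inl (ne_of_gt (by linarith [hx.2] : (0:ℝ) < t - x))
    · exact (measurable_deriv (deriv e)).aestronglyMeasurable
  -- finiteness of the integral
  have hfin : ∫⁻ r in Set.Ioo 0 t, (‖(t - r)^(1-α) * deriv (deriv e) r‖₊ : ENNReal) < ⊤ := by
    have hnn : ∀ r ∈ Set.Ioo (0:ℝ) t, Summable (fun k => ‖G k r‖₊) := by
      intro r hr
      rw [← NNReal.summable_coe]
      exact (hsummG r hr).congr (fun k => rfl)
    calc ∫⁻ r in Set.Ioo 0 t, (‖(t - r)^(1-α) * deriv (deriv e) r‖₊ : ENNReal)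
        ≤ ∫⁻ r in Set.Ioo 0 t, ∑' k, (‖G k r‖₊ : ENNReal) := by
          apply lintegral_mono_ae
          filter_upwards [ae_restrict_mem measurableSet_Ioo] with r hr
          rw [hptwise r hr]
          calc (‖∑' k, G k r‖₊ : ENNReal)
              ≤ ((∑' k, ‖G k r‖₊ : NNReal) : ENNReal) := by
                exact_mod_cast nnnorm_tsum_le (hnn r hr)
            _ = ∑' k, (‖G k r‖₊ : ENNReal) := ENNReal.coe_tsum (hnn r hr)
      _ = ∑' k, ∫⁻ r in Set.Ioo 0 t, (‖G k r‖₊ : ENNReal) :=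
          lintegral_tsum (fun k => (hGint k).aestronglyMeasurable.enorm)
      _ = ∑' k, ENNReal.ofReal (∫ r in Set.Ioo 0 t, ‖G k r‖) := by
          exact tsum_congr (fun k => (ofReal_integral_norm_eq_lintegral_enorm (hGint k)).symm)
      _ < ⊤ := by
          rw [← ENNReal.ofReal_tsum_of_nonneg
            (fun k => integral_nonneg (fun r => norm_nonneg _)) hsumnorm]
          exact ENNReal.ofReal_lt_top
  have hintOn : IntegrableOn
      (fun r : ℝ => (t - r)^(1-α) * deriv (deriv e) r) (Set.Ioo 0 t) volume :=
    ⟨hmeas, hfin⟩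
  refine ⟨hintOn, ?_⟩
  -- value of the integral
  have hval : ∫ r in Set.Ioo 0 t, (t - r)^(1-α) * deriv (deriv e) r
      = ∑' k, ∫ r in Set.Ioo 0 t, G k r := by
    rw [setIntegral_congr_fun measurableSet_Ioo hptwise]
    exact (integral_tsum_of_summable_integral_norm (fun k => hGint k) hsumnorm).symm
  have hS : Summable (fun k : ℕ => ∫ r in Set.Ioo 0 t, G k r) :=
    (hasSum_integral_of_summable_integral_norm (fun k => hGint k) hsumnorm).summable
  have hG0 : ∫ r in Set.Ioo 0 t, G 0 r = 0 := by
    simp [hGdef, hd20]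
  have hML : ∑' j : ℕ, (-lam)^j * t^(α*(j:ℝ)) / Real.Gamma (α*(j:ℝ)+1)
      = mittagLefflerReal α 1 (-(lam * t^α)) := by
    rw [mittagLefflerReal]
    apply tsum_congr
    intro j
    have htj : t^(α*(j:ℝ)) = (t^α)^j := by
      rw [Real.rpow_mul ht.le, Real.rpow_natCast]
    rw [htj]
    ring
  rw [hval, Summable.tsum_eq_zero_add hS, hG0, zero_add]
  have : ∑' j : ℕ, ∫ r in Set.Ioo 0 t, G (j+1) r
      = (Real.Gamma (2-α) * -lam) * mittagLefflerReal α 1 (-(lam * t^α)) := by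
    rw [tsum_congr hGval, tsum_mul_left, hML]
  rw [this]
  field_simp
end

section
/- Let 0 < α < 2 and let θ satisfy π/2 < θ < min{π, π/α}. Then there exists a constant c > 0, depending only on θ and α, such that for every nonzero complex number z with |arg z| ≤ θ and all real numbers a, b ≥ 0 one has |z^α| · a + b ≤ c · |z^α · a + b|. -/
/-- Let `0 < α < 2` and `π/2 < θ < min{π, π/α}`.  Then there is `c > 0`, depending only
on `θ` and `α`, such that for every nonzero complex `z` with `|arg z| ≤ θ` and all reals
`a, b ≥ 0` one has `|z^α|·a + b ≤ c·|z^α·a + b|`, with the principal power `z^α`. -/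
theorem sector_coercivity (α θ : ℝ) (h0 : 0 < α) (h2 : α < 2)
    (hθ1 : Real.pi / 2 < θ) (hθ2 : θ < min Real.pi (Real.pi / α)) :
    ∃ c : ℝ, 0 < c ∧ ∀ z : ℂ, z ≠ 0 → |Complex.arg z| ≤ θ →
      ∀ a b : ℝ, 0 ≤ a → 0 ≤ b →
        ‖z ^ (α : ℂ)‖ * a + b
          ≤ c * ‖z ^ (α : ℂ) * (a : ℂ) + (b : ℂ)‖ := by
  have hπ : 0 < Real.pi := Real.pi_pos
  have hθpos : 0 < θ := lt_trans (by positivity) hθ1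
  have hαθπ : α * θ < Real.pi := by
    have h := lt_of_lt_of_le hθ2 (min_le_right _ _)
    calc α * θ < α * (Real.pi / α) := by
          exact (mul_lt_mul_iff_right₀ h0).mpr h
      _ = Real.pi := by field_simp
  set γ : ℝ := Real.cos (α * θ) with hγdef
  have hγgt : -1 < γ := by
    have := Real.cos_lt_cos_of_nonneg_of_le_pi (by positivity) le_rfl hαθπ
    simpa [Real.cos_pi] using this
  have hγle : γ ≤ 1 := Real.cos_le_one _
  have h1γ : 0 < 1 + γ := by linarith
  refine ⟨Real.sqrt (2 / (1 + γ)), Real.sqrt_pos.mpr (by positivity), ?_⟩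
  intro z hz hargz a b ha hb
  set w : ℂ := z ^ (α : ℂ) with hw
  -- compute abs and re of w
  have hwdef : w = Complex.exp (Complex.log z * α) := by
    rw [hw, Complex.cpow_def_of_ne_zero hz]
  have habs : ‖w‖ = Real.exp (Real.log (‖z‖) * α) := by
    rw [hwdef, Complex.norm_exp]
    simp [Complex.log_re]
  have hre : w.re = Real.exp (Real.log (‖z‖) * α)
      * Real.cos (Complex.arg z * α) := by
    rw [hwdef, Complex.exp_re]
    simp [Complex.log_re, Complex.log_im]
  -- cos bound
  have hcos : γ ≤ Real.cos (Complex.arg z * α) := by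
    rw [← Real.cos_abs (Complex.arg z * α)]
    apply Real.cos_le_cos_of_nonneg_of_le_pi (abs_nonneg _) (le_of_lt hαθπ)
    rw [abs_mul, abs_of_pos h0]
    calc |Complex.arg z| * α ≤ θ * α :=
          mul_le_mul_of_nonneg_right hargz (le_of_lt h0)
      _ = α * θ := mul_comm _ _
  have hrebound : γ * ‖w‖ ≤ w.re := by
    rw [hre, habs]
    calc γ * Real.exp (Real.log (‖z‖) * α)
        ≤ Real.cos (Complex.arg z * α) * Real.exp (Real.log (‖z‖) * α) :=
          mul_le_mul_of_nonneg_right hcos (Real.exp_nonneg _)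
      _ = _ := mul_comm _ _
  -- the squared estimate
  set x : ℝ := ‖w‖ * a with hx
  set M : ℝ := ‖w * (a : ℂ) + (b : ℂ)‖ with hM
  have hMsq : M ^ 2 = (‖w‖) ^ 2 * a ^ 2 + 2 * w.re * a * b + b ^ 2 := by
    rw [hM, ← Complex.normSq_eq_norm_sq, Complex.normSq_apply]
    have h1 : (w * (a : ℂ) + (b : ℂ)).re = w.re * a + b := by simp
    have h2 : (w * (a : ℂ) + (b : ℂ)).im = w.im * a := by simp
    rw [h1, h2]
    have h3 : (‖w‖) ^ 2 = w.re ^ 2 + w.im ^ 2 := by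
      rw [← Complex.normSq_eq_norm_sq, Complex.normSq_apply]; ring
    rw [h3]; ring
  have hwnn : 0 ≤ ‖w‖ := norm_nonneg _
  have hkey : ((1 + γ) / 2) * (x + b) ^ 2 ≤ M ^ 2 := by
    rw [hMsq, hx]
    nlinarith [mul_le_mul_of_nonneg_right (mul_le_mul_of_nonneg_right hrebound ha) hb,
      mul_nonneg (mul_nonneg hwnn ha) hb, sq_nonneg (‖w‖ * a - b),
      sq_nonneg (‖w‖ * a + b)]
  have hxb : 0 ≤ x + b := add_nonneg (mul_nonneg hwnn ha) hb
  have hMnn : 0 ≤ M := norm_nonneg _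
  have hfin : (x + b) ^ 2 ≤ (Real.sqrt (2 / (1 + γ)) * M) ^ 2 := by
    have hs : (Real.sqrt (2 / (1 + γ))) ^ 2 = 2 / (1 + γ) :=
      Real.sq_sqrt (by positivity)
    rw [mul_pow, hs]
    rw [div_mul_eq_mul_div, le_div_iff₀ (by positivity)]
    nlinarith [hkey]
  calc ‖w‖ * a + b = x + b := by rw [hx]
    _ ≤ Real.sqrt (2 / (1 + γ)) * M := by
        have := Real.sqrt_le_sqrt hfin
        rwa [Real.sqrt_sq hxb, Real.sqrt_sq (by positivity)] at this
    _ = _ := rfl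
end

section
/- Let 0 < α < 2 and let θ satisfy π/2 < θ < min{π, π/α}. Then there exists a constant c > 0, depending only on θ and α, such that for every nonzero complex number z with |arg z| ≤ θ and every real μ ≥ 0 one has |z^α + μ| ≥ c (|z|^α + μ). In particular |z^α + μ|^{−1} ≤ C |z|^{−α} with C = 1/c, uniformly in μ ≥ 0. -/
/-- Let `0 < α < 2` and `π/2 < θ < min{π, π/α}`.  Then there is `c > 0`, depending only
on `θ` and `α`, such that for every nonzero complex `z` with `|arg z| ≤ θ` and every real
`μ ≥ 0` one has `|z^α + μ| ≥ c (|z|^α + μ)`, with the principal power `z^α`.  In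
particular `|z^α + μ|⁻¹ ≤ C |z|^{−α}` with `C = 1/c`, uniformly in `μ ≥ 0`. -/
theorem sector_resolvent_bound (α θ : ℝ) (h0 : 0 < α) (h2 : α < 2)
    (hθ1 : Real.pi / 2 < θ) (hθ2 : θ < min Real.pi (Real.pi / α)) :
    ∃ c : ℝ, 0 < c ∧ ∀ z : ℂ, z ≠ 0 → |Complex.arg z| ≤ θ → ∀ μ : ℝ, 0 ≤ μ →
      c * (‖z‖ ^ α + μ) ≤ ‖z ^ (α : ℂ) + (μ : ℂ)‖ ∧
      ‖z ^ (α : ℂ) + (μ : ℂ)‖⁻¹ ≤ (1 / c) * ‖z‖ ^ (-α) := by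
  have hπ : 0 < Real.pi := Real.pi_pos
  have hθpos : 0 < θ := lt_trans (by positivity) hθ1
  have hθπα : θ < Real.pi / α := lt_of_lt_of_le hθ2 (min_le_right _ _)
  have hαθ : α * θ < Real.pi := by
    have := (mul_lt_mul_of_pos_left hθπα h0)
    calc α * θ < α * (Real.pi / α) := this
      _ = Real.pi := by field_simp
  have hαθ0 : 0 < α * θ := mul_pos h0 hθpos
  set k := Real.cos (α * θ) with hkdef
  have hk1 : -1 < k := by
    have := Real.cos_lt_cos_of_nonneg_of_le_pi (le_of_lt hαθ0) le_rfl hαθ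
    rwa [Real.cos_pi] at this
  have hk2 : k ≤ 1 := Real.cos_le_one _
  set c := Real.sqrt ((1 + k) / 2) with hcdef
  have hc : 0 < c := Real.sqrt_pos.mpr (by linarith)
  have hc2 : c ^ 2 = (1 + k) / 2 := Real.sq_sqrt (by linarith)
  refine ⟨c, hc, fun z hz harg μ hμ => ?_⟩
  set a := ‖z‖ ^ α with hadef
  have hzabs : 0 < ‖z‖ := norm_pos_iff.mpr hz
  have ha0 : 0 < a := Real.rpow_pos_of_pos hzabs α
  set w := z ^ (α : ℂ) with hwdef
  have habs : ‖w‖ = a := by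
    rw [hwdef, Complex.norm_cpow_real]
  have hre : w.re = a * Real.cos (α * Complex.arg z) := by
    rw [hwdef, Complex.cpow_def_of_ne_zero hz, Complex.exp_re]
    have h1 : (Complex.log z * (α : ℂ)).re = Real.log ‖z‖ * α := by
      simp [Complex.log_re]
    have h2 : (Complex.log z * (α : ℂ)).im = α * Complex.arg z := by
      simp [Complex.log_im, mul_comm]
    rw [h1, h2, hadef, Real.rpow_def_of_pos hzabs]
  have hcos : k ≤ Real.cos (α * Complex.arg z) := by
    have habs2 : |α * Complex.arg z| ≤ α * θ := by
      rw [abs_mul, abs_of_pos h0]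
      exact mul_le_mul_of_nonneg_left harg h0.le
    have := Real.cos_le_cos_of_nonneg_of_le_pi (abs_nonneg _) hαθ.le habs2
    rwa [Real.cos_abs] at this
  have him : w.re * w.re + w.im * w.im = a ^ 2 := by
    rw [← Complex.normSq_apply, ← Complex.sq_norm, habs]
  have hcost1 : Real.cos (α * Complex.arg z) ≤ 1 := Real.cos_le_one _
  have hsq : (c * (a + μ)) ^ 2 ≤ ‖w + (μ : ℂ)‖ ^ 2 := by
    rw [Complex.sq_norm, Complex.normSq_apply]
    simp only [Complex.add_re, Complex.add_im, Complex.ofReal_re, Complex.ofReal_im,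
      add_zero]
    nlinarith [sq_nonneg (a - μ), mul_nonneg (mul_nonneg hμ ha0.le)
      (sub_nonneg.mpr hcos), sq_nonneg (a + μ)]
  have h1 : c * (a + μ) ≤ ‖w + (μ : ℂ)‖ := by
    have h := Real.sqrt_le_sqrt hsq
    rwa [Real.sqrt_sq (by positivity), Real.sqrt_sq (norm_nonneg _)] at h
  refine ⟨h1, ?_⟩
  have hca : 0 < c * a := mul_pos hc ha0
  have hle : c * a ≤ ‖w + (μ : ℂ)‖ := le_trans (by nlinarith) h1
  have hpos : 0 < ‖w + (μ : ℂ)‖ := lt_of_lt_of_le hca hle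
  have hinv : ‖w + (μ : ℂ)‖⁻¹ ≤ (c * a)⁻¹ := by
    exact inv_anti₀ hca hle
  calc ‖w + (μ : ℂ)‖⁻¹ ≤ (c * a)⁻¹ := hinv
    _ = (1 / c) * a⁻¹ := by rw [mul_inv]; ring
    _ = (1 / c) * ‖z‖ ^ (-α) := by
        rw [hadef, Real.rpow_neg hzabs.le]
end
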